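/- arXiv:1411.0508 — 6 statements merged into one kernel-verified Lean document; each statement's English description precedes it below -/
import Mathlib

section
/- Let G be a compact Hausdorff Abelian topological group with Haar probability measure m, let p be a prime number, and suppose there is a sequence (γ_i)_{i∈ℕ} of continuous characters of G, each of order exactly p, that are independent, i.e. the subgroup of the dual group generated by the γ_i is isomorphic to the countable direct sum ⊕_{i∈ℕ} ℤ/pℤ. Then for every strictly increasing sequence of natural numbers (n_k)_{k≥0} there exists a measurable function f : G → ℝ with f ∉ L¹(G,m) such that Γ_{f,0} = G, i.e. for every α ∈ G, for m-a.e. x, f(x + n_k·α)/k → 0 as k → ∞. -/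
open MeasureTheory Filter
open scoped ENNReal

private lemma char_integral_eq_zero {G : Type*} [AddCommGroup G] [TopologicalSpace G]
    [IsTopologicalAddGroup G] [MeasurableSpace G] [BorelSpace G]
    (m : Measure G) [m.IsAddHaarMeasure]
    {χ : G → ℂ} (hhom : ∀ x y, χ (x + y) = χ x * χ y)
    {y : G} (hy : χ y ≠ 1) : ∫ x, χ x ∂m = 0 := by
  have h1 : ∫ x, χ (y + x) ∂m = ∫ x, χ x ∂m := integral_add_left_eq_self χ y
  have h2 : ∫ x, χ (y + x) ∂m = χ y * ∫ x, χ x ∂m := by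
    simp_rw [hhom y]
    exact integral_const_mul _ _
  have h3 : (χ y - 1) * ∫ x, χ x ∂m = 0 := by
    rw [sub_mul, one_mul, ← h2, h1, sub_self]
  rcases mul_eq_zero.1 h3 with h | h
  · exact absurd (sub_eq_zero.1 h) hy
  · exact h

private lemma kernel_meas {G : Type*} [AddCommGroup G] [TopologicalSpace G]
    [IsTopologicalAddGroup G] [CompactSpace G] [T2Space G] [MeasurableSpace G] [BorelSpace G]
    (m : Measure G) [m.IsAddHaarMeasure] [IsProbabilityMeasure m]
    (p : ℕ) (hp : p.Prime) (γ : ℕ → G → ℂ)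
    (hcont : ∀ i, Continuous (γ i))
    (hhom : ∀ i x y, γ i (x + y) = γ i x * γ i y)
    (horder : ∀ i x, γ i x ^ p = 1)
    (hindep : ∀ (s : Finset ℕ) (a : ℕ → ℤ),
      (∀ x, ∏ i ∈ s, γ i x ^ a i = 1) → ∀ i ∈ s, (p : ℤ) ∣ a i)
    (S : Finset ℕ) :
    m {x | ∀ j ∈ S, γ j x = 1} = ENNReal.ofReal ((p : ℝ)⁻¹ ^ S.card) := by
  classical
  set K := {x : G | ∀ j ∈ S, γ j x = 1} with hKdef
  have hKmeas : MeasurableSet K := by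
    have : K = ⋂ j ∈ S, γ j ⁻¹' {1} := by
      ext x; simp [hKdef]
    rw [this]
    exact MeasurableSet.biInter S.countable_toSet
      (fun j _ => (hcont j).measurable (measurableSet_singleton 1))
  have hpnz : (p : ℂ) ≠ 0 := Nat.cast_ne_zero.mpr hp.ne_zero
  -- pointwise identity
  have hpt : ∀ x, Set.indicator K (fun _ => (1 : ℂ)) x
      = ∏ j ∈ S, ((p : ℂ)⁻¹ * ∑ a ∈ Finset.range p, γ j x ^ a) := by
    intro x
    by_cases hx : x ∈ K
    · rw [Set.indicator_of_mem hx]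
      symm
      apply Finset.prod_eq_one
      intro j hj
      rw [hx j hj]
      simp only [one_pow, Finset.sum_const, Finset.card_range, nsmul_eq_mul, mul_one]
      exact inv_mul_cancel₀ hpnz
    · rw [Set.indicator_of_notMem hx]
      simp only [hKdef, Set.mem_setOf_eq, not_forall] at hx
      obtain ⟨j, hj, hne⟩ := hx
      symm
      apply Finset.prod_eq_zero hj
      rw [geom_sum_eq hne, horder j x]
      simp
  -- integrability of each product term
  have hint : ∀ (b : (j : ℕ) → j ∈ S → ℕ),
      Integrable (fun x => ∏ j ∈ S.attach, γ j.1 x ^ (b j.1 j.2)) m := by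
    intro b
    apply Continuous.integrable_of_hasCompactSupport
    · exact continuous_finset_prod _ (fun j _ => (hcont j.1).pow _)
    · exact HasCompactSupport.of_compactSpace _
  -- vanishing of nontrivial character integrals
  have hzero : ∀ (b : (j : ℕ) → j ∈ S → ℕ), b ∈ S.pi (fun _ => Finset.range p) →
      b ≠ (fun _ _ => 0) →
      (∫ x, ∏ j ∈ S.attach, γ j.1 x ^ (b j.1 j.2) ∂m) = 0 := by
    intro b hb hbne
    set χ : G → ℂ := fun x => ∏ j ∈ S.attach, γ j.1 x ^ (b j.1 j.2) with hχ
    have hχhom : ∀ x y, χ (x + y) = χ x * χ y := by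
      intro x y
      simp only [hχ, hhom, mul_pow]
      exact Finset.prod_mul_distrib
    by_cases hall : ∀ y, χ y = 1
    · exfalso
      apply hbne
      have h1 : ∀ x, ∏ j ∈ S,
          γ j x ^ ((fun j => if h : j ∈ S then ((b j h : ℕ) : ℤ) else 0) j) = 1 := by
        intro x
        rw [← Finset.prod_attach S
          (fun j => γ j x ^ ((fun j => if h : j ∈ S then ((b j h : ℕ) : ℤ) else 0) j))]
        rw [← hall x, hχ]
        apply Finset.prod_congr rfl
        intro j _
        simp only [dif_pos j.2, zpow_natCast]
      have h2 := hindep S _ h1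
      funext j hj
      have h3 := h2 j hj
      rw [dif_pos hj] at h3
      have hdvd : p ∣ b j hj := Int.ofNat_dvd.mp (by exact_mod_cast h3)
      have hlt : b j hj < p := Finset.mem_range.mp (Finset.mem_pi.mp hb j hj)
      exact Nat.eq_zero_of_dvd_of_lt hdvd hlt
    · push_neg at hall
      obtain ⟨y, hy⟩ := hall
      exact char_integral_eq_zero m hχhom hy
  -- main computation
  have h1 : ∫ x, Set.indicator K (fun _ => (1 : ℂ)) x ∂m = (m K).toReal • (1 : ℂ) :=
    integral_indicator_const (1 : ℂ) hKmeas
  have h2 : ∫ x, ∏ j ∈ S, ((p : ℂ)⁻¹ * ∑ a ∈ Finset.range p, γ j x ^ a) ∂m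
      = (p : ℂ)⁻¹ ^ S.card := by
    have expand : ∀ x : G, ∏ j ∈ S, ((p : ℂ)⁻¹ * ∑ a ∈ Finset.range p, γ j x ^ a)
        = (p : ℂ)⁻¹ ^ S.card * ∑ b ∈ S.pi (fun _ => Finset.range p),
            ∏ j ∈ S.attach, γ j.1 x ^ (b j.1 j.2) := by
      intro x
      rw [Finset.prod_mul_distrib, Finset.prod_const, Finset.prod_sum]
    simp_rw [expand]
    rw [integral_const_mul, integral_finset_sum _ (fun b _ => hint b)]
    rw [Finset.sum_eq_single_of_mem (fun _ _ => 0)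
      (Finset.mem_pi.mpr (fun j hj => Finset.mem_range.mpr hp.pos))
      (fun b hb hbne => hzero b hb hbne)]
    simp
  have h3 : ((m K).toReal : ℂ) = (((p : ℝ)⁻¹ ^ S.card : ℝ) : ℂ) := by
    have := h1.symm.trans ((integral_congr_ae (Eventually.of_forall hpt)).trans h2)
    rw [Complex.real_smul, mul_one] at this
    rw [this]
    push_cast
    ring
  have h4 : (m K).toReal = (p : ℝ)⁻¹ ^ S.card := by exact_mod_cast h3
  rw [← h4, ENNReal.ofReal_toReal (measure_ne_top m K)]

/-- **Theorem (multiple torsion of type (i)).**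
If the dual group of the compact Hausdorff abelian group `G` contains a countable independent
family of continuous characters, each of order exactly `p` (so that the dual contains a
subgroup isomorphic to `⊕_{i∈ℕ} ℤ/pℤ`), then for every strictly increasing sequence `(n k)`
of naturals there is a measurable `f ∉ L¹(G, m)` with `Γ_{f,0} = G`. -/
theorem exists_nonintegrable_with_full_tail_rotation_set_of_prime_torsion
    {G : Type*} [AddCommGroup G] [TopologicalSpace G] [IsTopologicalAddGroup G]
    [CompactSpace G] [T2Space G] [MeasurableSpace G] [BorelSpace G]
    (m : Measure G) [m.IsAddHaarMeasure] [IsProbabilityMeasure m]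
    (p : ℕ) (hp : p.Prime)
    (γ : ℕ → G → ℂ)
    (hcont : ∀ i, Continuous (γ i))
    (hhom : ∀ i x y, γ i (x + y) = γ i x * γ i y)
    (hnorm : ∀ i x, ‖γ i x‖ = 1)
    (horder : ∀ i x, γ i x ^ p = 1)
    (hnontriv : ∀ i, ∃ x, γ i x ≠ 1)
    (hindep : ∀ (s : Finset ℕ) (a : ℕ → ℤ),
      (∀ x, ∏ i ∈ s, γ i x ^ a i = 1) → ∀ i ∈ s, (p : ℤ) ∣ a i)
    (n : ℕ → ℕ) (hn : StrictMono n) :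
    ∃ f : G → ℝ, Measurable f ∧ ¬ Integrable f m ∧
      ∀ α : G, ∀ᵐ x ∂m,
        Tendsto (fun k : ℕ => f (x + n k • α) / (k : ℝ)) atTop (nhds 0) := by
  classical
  have hp2 : 2 ≤ p := hp.two_le
  have hpnz : (p : ℝ≥0∞) ≠ 0 := by
    simp [hp.ne_zero]
  have hptop : (p : ℝ≥0∞) ≠ ∞ := ENNReal.natCast_ne_top p
  set C : ℕ → Set G := fun i => {x | ∀ j ∈ Finset.range (i + 1), γ j x = 1} with hCdef
  have hCmeas : ∀ i, MeasurableSet (C i) := by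
    intro i
    have h : C i = ⋂ j ∈ Finset.range (i + 1), γ j ⁻¹' {1} := by
      ext x; simp [hCdef]
    rw [h]
    exact MeasurableSet.biInter (Finset.range (i + 1)).countable_toSet
      (fun j _ => (hcont j).measurable (measurableSet_singleton 1))
  have hCm : ∀ i, m (C i) = ((p : ℝ≥0∞))⁻¹ ^ (i + 1) := by
    intro i
    have h := kernel_meas m p hp γ hcont hhom horder hindep (Finset.range (i + 1))
    rw [Finset.card_range] at h
    have hppos : (0 : ℝ) < (p : ℝ) := by exact_mod_cast hp.pos
    rw [hCdef]
    simp only []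
    rw [h, ENNReal.ofReal_pow (by positivity), ENNReal.ofReal_inv_of_pos hppos,
      ENNReal.ofReal_natCast]
  have hmul : ∀ i, (p : ℝ≥0∞) ^ (i + 1) * m (C i) = 1 := by
    intro i
    rw [hCm i, ← mul_pow, ENNReal.mul_inv_cancel hpnz hptop, one_pow]
  have hhalf : ((p : ℝ≥0∞))⁻¹ ≤ (2 : ℝ≥0∞)⁻¹ :=
    ENNReal.inv_le_inv' (by exact_mod_cast hp2)
  have h2inv1 : (2 : ℝ≥0∞)⁻¹ ≤ 1 := ENNReal.inv_le_one.mpr (by norm_num)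
  have hCle : ∀ i, m (C i) ≤ (2 : ℝ≥0∞)⁻¹ ^ i := by
    intro i
    rw [hCm i]
    calc ((p : ℝ≥0∞))⁻¹ ^ (i + 1) ≤ (2 : ℝ≥0∞)⁻¹ ^ (i + 1) := pow_le_pow_left' hhalf _
      _ ≤ (2 : ℝ≥0∞)⁻¹ ^ i := by
          rw [pow_succ]
          exact (mul_le_mul_right h2inv1 _).trans (le_of_eq (mul_one _))
  have hgeo : ∑' i : ℕ, ((2 : ℝ≥0∞)⁻¹) ^ i ≠ ∞ := by
    rw [ENNReal.tsum_geometric]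
    refine ENNReal.inv_ne_top.mpr ?_
    intro h
    rw [tsub_eq_zero_iff_le] at h
    exact absurd h (not_le.mpr (ENNReal.inv_lt_one.mpr (by norm_num)))
  set g : G → ℝ≥0∞ :=
    fun x => ∑' i, Set.indicator (C i) (fun _ => (p : ℝ≥0∞) ^ (i + 1)) x with hgdef
  have hgmeas : Measurable g :=
    Measurable.ennreal_tsum (fun i => measurable_const.indicator (hCmeas i))
  have hBfin : ∀ N : ℕ, (∑ i ∈ Finset.range N, (p : ℝ≥0∞) ^ (i + 1)) ≠ ∞ :=
    fun N => ENNReal.sum_ne_top.mpr (fun i _ => ENNReal.pow_ne_top hptop)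
  have gbound : ∀ (N : ℕ) (y : G), (∀ i, N ≤ i → y ∉ C i) →
      g y ≤ ∑ i ∈ Finset.range N, (p : ℝ≥0∞) ^ (i + 1) := by
    intro N y hy
    have h0 : ∀ i ∉ Finset.range N,
        Set.indicator (C i) (fun _ => (p : ℝ≥0∞) ^ (i + 1)) y = 0 := by
      intro i hi
      exact Set.indicator_of_notMem (hy i (by simpa using hi)) _
    rw [hgdef]
    simp only []
    rw [tsum_eq_sum h0]
    exact Finset.sum_le_sum fun i _ => Set.indicator_le_self _ _ y
  refine ⟨fun x => (g x).toReal, hgmeas.ennreal_toReal, ?_, ?_⟩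
  · -- not integrable
    intro hInt
    have hfin : ∀ᵐ x ∂m, g x ≠ ∞ := by
      have h0 : m (limsup C atTop) = 0 :=
        measure_limsup_atTop_eq_zero
          (ne_top_of_le_ne_top hgeo (ENNReal.tsum_le_tsum fun i => hCle i))
      filter_upwards [measure_eq_zero_iff_ae_notMem.mp h0] with x hx
      rw [mem_limsup_iff_frequently_mem, Filter.not_frequently] at hx
      obtain ⟨N, hN⟩ := Filter.eventually_atTop.mp hx
      exact ne_top_of_le_ne_top (hBfin N) (gbound N x (fun i hi => hN i hi))
    have hlint : ∫⁻ x, ENNReal.ofReal ‖(g x).toReal‖ ∂m = ∞ := by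
      have he : ∀ᵐ x ∂m, ENNReal.ofReal ‖(g x).toReal‖ = g x := by
        filter_upwards [hfin] with x hx
        rw [Real.norm_of_nonneg ENNReal.toReal_nonneg, ENNReal.ofReal_toReal hx]
      rw [lintegral_congr_ae he, hgdef]
      simp only []
      rw [lintegral_tsum (fun i => (measurable_const.indicator (hCmeas i)).aemeasurable)]
      have hterm : ∀ i : ℕ,
          ∫⁻ x, Set.indicator (C i) (fun _ => (p : ℝ≥0∞) ^ (i + 1)) x ∂m = 1 := by
        intro i
        rw [lintegral_indicator_const (hCmeas i), hmul i]
      rw [tsum_congr hterm]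
      exact ENNReal.tsum_const_eq_top_of_ne_zero one_ne_zero
    have h5 := (hasFiniteIntegral_iff_norm _).mp hInt.2
    rw [hlint] at h5
    exact lt_irrefl _ h5
  · -- tendsto
    intro α
    have hsmul : ∀ j (y : G) (s : ℕ), γ j (y + s • α) = γ j y * γ j α ^ s := by
      intro j y s
      induction s with
      | zero => simp
      | succ s ih => rw [succ_nsmul, ← add_assoc, hhom j, ih, pow_succ, mul_assoc]
    have hmodp : ∀ j (s : ℕ), γ j α ^ s = γ j α ^ (s % p) := by
      intro j s
      conv_lhs => rw [← Nat.div_add_mod s p]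
      rw [pow_add, pow_mul, horder j α, one_pow, one_mul]
    set D : ℕ → Set G := fun i => ⋃ r ∈ Finset.range p, (fun x => x + r • α) ⁻¹' C i
      with hDdef
    have hDm : ∀ i, m (D i) ≤ (p : ℝ≥0∞) * m (C i) := by
      intro i
      refine le_trans (measure_biUnion_finset_le _ _) ?_
      have h : ∀ r ∈ Finset.range p, m ((fun x => x + r • α) ⁻¹' C i) = m (C i) :=
        fun r _ => measure_preimage_add_right m (r • α) (C i)
      rw [Finset.sum_congr rfl h, Finset.sum_const, Finset.card_range, nsmul_eq_mul]
    have hDsum : ∑' i, m (D i) ≠ ∞ := by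
      refine ne_top_of_le_ne_top hgeo (ENNReal.tsum_le_tsum fun i => ?_)
      calc m (D i) ≤ (p : ℝ≥0∞) * m (C i) := hDm i
        _ = ((p : ℝ≥0∞))⁻¹ ^ i := by
            rw [hCm i, pow_succ', ← mul_assoc, ENNReal.mul_inv_cancel hpnz hptop, one_mul]
        _ ≤ (2 : ℝ≥0∞)⁻¹ ^ i := pow_le_pow_left' hhalf i
    have h0 : m (limsup D atTop) = 0 := measure_limsup_atTop_eq_zero hDsum
    filter_upwards [measure_eq_zero_iff_ae_notMem.mp h0] with x hx
    rw [mem_limsup_iff_frequently_mem, Filter.not_frequently] at hx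
    obtain ⟨N, hN⟩ := Filter.eventually_atTop.mp hx
    have hkey : ∀ k i, N ≤ i → x + n k • α ∉ C i := by
      intro k i hi hmem
      apply hN i hi
      have hr : n k % p ∈ Finset.range p := Finset.mem_range.mpr (Nat.mod_lt _ hp.pos)
      have hmem' : x ∈ (fun y => y + (n k % p) • α) ⁻¹' C i := by
        simp only [Set.mem_preimage, hCdef, Set.mem_setOf_eq]
        intro j hj
        have h1 : γ j (x + n k • α) = 1 := hmem j hj
        rw [hsmul j x (n k)] at h1
        rw [hsmul j x (n k % p), ← hmodp j (n k)]
        exact h1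
      rw [hDdef]
      exact Set.mem_biUnion hr hmem'
    have hb : ∀ k, g (x + n k • α) ≤ ∑ i ∈ Finset.range N, (p : ℝ≥0∞) ^ (i + 1) :=
      fun k => gbound N _ (fun i hi => hkey k i hi)
    refine squeeze_zero' (Eventually.of_forall fun k => ?_) ?_
      (tendsto_const_div_atTop_nhds_zero_nat
        (∑ i ∈ Finset.range N, (p : ℝ≥0∞) ^ (i + 1)).toReal)
    · exact div_nonneg ENNReal.toReal_nonneg (Nat.cast_nonneg k)
    · filter_upwards [eventually_ge_atTop 1] with k hk
      have hkpos : (0 : ℝ) < (k : ℝ) := by exact_mod_cast hk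
      exact (div_le_div_iff_of_pos_right hkpos).mpr (ENNReal.toReal_mono (hBfin N) (hb k))
end

section
/- Let G be a compact Hausdorff Abelian topological group with Haar probability measure m, and suppose there are infinitely many distinct primes p such that the dual group of G contains a subgroup isomorphic to (ℤ/pℤ) × (ℤ/pℤ), i.e. for each such p there are two independent continuous characters of G of order exactly p. Then for every strictly increasing sequence of natural numbers (n_k)_{k≥0} there exists a measurable function f : G → ℝ with f ∉ L¹(G,m) such that Γ_{f,0} = G, i.e. for every α ∈ G, for m-a.e. x, f(x + n_k·α)/k → 0 as k → ∞. -/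
open MeasureTheory Filter
open scoped ENNReal

section Aux

variable {G : Type*} [AddCommGroup G]

/-- A multiplicative map with torsion values sends `0` to `1`. -/
private lemma char_map_zero (γ : G → ℂ) (hadd : ∀ x y, γ (x + y) = γ x * γ y)
    {p : ℕ} (hp : 0 < p) (hord : ∀ x, γ x ^ p = 1) : γ 0 = 1 := by
  have h0 : γ 0 ≠ 0 := by
    intro h
    have := hord 0
    rw [h, zero_pow hp.ne'] at this
    exact zero_ne_one this
  have h2 : γ 0 * γ 0 = γ 0 * 1 := by
    rw [mul_one]; rw [← hadd 0 0, add_zero]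
  exact mul_left_cancel₀ h0 h2

private lemma char_nsmul (γ : G → ℂ) (hadd : ∀ x y, γ (x + y) = γ x * γ y)
    (h0 : γ 0 = 1) : ∀ (k : ℕ) (x : G), γ (k • x) = γ x ^ k := by
  intro k x
  induction k with
  | zero => simpa using h0
  | succ k ih => rw [succ_nsmul, hadd, ih, pow_succ]

/-- **Key lemma**: for a prime `p` and two independent characters of order `p`, the joint
kernel `A` has Haar measure `(p²)⁻¹`, and for every `α` the set of `x` whose orbit
`x + N k • α` ever meets `A` has measure at most `p⁻¹`. -/
private lemma key_lemma
    {G : Type*} [AddCommGroup G] [TopologicalSpace G] [IsTopologicalAddGroup G]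
    [CompactSpace G] [T2Space G] [MeasurableSpace G] [BorelSpace G]
    (m : Measure G) [m.IsAddHaarMeasure] [IsProbabilityMeasure m]
    (p : ℕ) (hp : p.Prime) (γ₁ γ₂ : G → ℂ)
    (hc₁ : Continuous γ₁) (hc₂ : Continuous γ₂)
    (hadd₁ : ∀ x y, γ₁ (x + y) = γ₁ x * γ₁ y) (hadd₂ : ∀ x y, γ₂ (x + y) = γ₂ x * γ₂ y)
    (hord₁ : ∀ x, γ₁ x ^ p = 1) (hord₂ : ∀ x, γ₂ x ^ p = 1)
    (hind : ∀ a b : ℤ, (∀ x, γ₁ x ^ a * γ₂ x ^ b = 1) → (p : ℤ) ∣ a ∧ (p : ℤ) ∣ b)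
    (N : ℕ → ℕ) :
    ∃ A : Set G, MeasurableSet A ∧ m A = (((p : ℝ≥0∞)) ^ 2)⁻¹ ∧
      ∀ α : G, m {x | ∃ k, x + N k • α ∈ A} ≤ (p : ℝ≥0∞)⁻¹ := by
  haveI : Fact p.Prime := ⟨hp⟩
  haveI : NeZero p := ⟨hp.ne_zero⟩
  have hz₁ : γ₁ 0 = 1 := char_map_zero γ₁ hadd₁ hp.pos hord₁
  have hz₂ : γ₂ 0 = 1 := char_map_zero γ₂ hadd₂ hp.pos hord₂
  have hpow₁ := char_nsmul γ₁ hadd₁ hz₁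
  have hpow₂ := char_nsmul γ₂ hadd₂ hz₂
  set ζ : ℂ := Complex.exp (2 * Real.pi * Complex.I / p) with hζdef
  have hζ : IsPrimitiveRoot ζ p := Complex.isPrimitiveRoot_exp p hp.ne_zero
  -- congruence for powers of ζ
  have hmod : ∀ a : ℕ, ζ ^ a = ζ ^ (a % p) := by
    intro a
    conv_lhs => rw [← Nat.mod_add_div a p]
    rw [pow_add, pow_mul, hζ.pow_eq_one, one_pow, mul_one]
  have hcongr : ∀ a b : ℕ, (a : ZMod p) = (b : ZMod p) → ζ ^ a = ζ ^ b := by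
    intro a b hab
    rw [hmod a, hmod b]
    congr 1
    exact (ZMod.natCast_eq_natCast_iff a b p).mp hab
  have hinj : ∀ i j : ZMod p, ζ ^ i.val = ζ ^ j.val → i = j := by
    intro i j hij
    exact ZMod.val_injective p (hζ.pow_inj (ZMod.val_lt i) (ZMod.val_lt j) hij)
  -- discrete logarithms
  have hlog₁ : ∀ x : G, ∃ i : ZMod p, ζ ^ i.val = γ₁ x := by
    intro x
    obtain ⟨i, hi, hiz⟩ := hζ.eq_pow_of_pow_eq_one (hord₁ x)
    exact ⟨(i : ZMod p), by rwa [ZMod.val_cast_of_lt hi]⟩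
  have hlog₂ : ∀ x : G, ∃ i : ZMod p, ζ ^ i.val = γ₂ x := by
    intro x
    obtain ⟨i, hi, hiz⟩ := hζ.eq_pow_of_pow_eq_one (hord₂ x)
    exact ⟨(i : ZMod p), by rwa [ZMod.val_cast_of_lt hi]⟩
  choose u hu using hlog₁
  choose v hv using hlog₂
  have hu_add : ∀ x y, u (x + y) = u x + u y := by
    intro x y
    apply hinj
    rw [hu, hadd₁, ← hu x, ← hu y, ← pow_add]
    exact (hcongr _ _ (by push_cast [ZMod.natCast_zmod_val]; ring)).symm
  have hv_add : ∀ x y, v (x + y) = v x + v y := by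
    intro x y
    apply hinj
    rw [hv, hadd₂, ← hv x, ← hv y, ← pow_add]
    exact (hcongr _ _ (by push_cast [ZMod.natCast_zmod_val]; ring)).symm
  -- the joint character
  set e : G → ZMod p × ZMod p := fun x => (u x, v x) with hedef
  have he_add : ∀ x y, e (x + y) = e x + e y := by
    intro x y; simp [hedef, hu_add, hv_add, Prod.ext_iff]
  -- fibers of e in terms of γ
  have hfiber : ∀ (x : G) (t : ZMod p × ZMod p),
      e x = t ↔ (γ₁ x = ζ ^ t.1.val ∧ γ₂ x = ζ ^ t.2.val) := by
    intro x t
    constructor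
    · rintro rfl
      exact ⟨(hu x).symm, (hv x).symm⟩
    · rintro ⟨h1, h2⟩
      have e1 : u x = t.1 := hinj _ _ (by rw [hu, h1])
      have e2 : v x = t.2 := hinj _ _ (by rw [hv, h2])
      simp [hedef, e1, e2]
  -- surjectivity of e
  have hsurj : Function.Surjective e := by
    by_contra hns
    rw [Function.Surjective] at hns
    push_neg at hns
    obtain ⟨t₀, ht₀⟩ := hns
    set E : G →+ ZMod p × ZMod p := AddMonoidHom.mk' e he_add with hEdef
    set W : Submodule (ZMod p) (ZMod p × ZMod p) :=
      AddSubgroup.toZModSubmodule p E.range with hWdef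
    have hWlt : W < ⊤ := by
      rw [lt_top_iff_ne_top]
      intro htop
      have : t₀ ∈ W := htop ▸ Submodule.mem_top
      rw [hWdef, AddSubgroup.mem_toZModSubmodule, AddMonoidHom.mem_range] at this
      obtain ⟨x, hx⟩ := this
      exact ht₀ x hx
    obtain ⟨f, hf0, hfker⟩ := W.exists_le_ker_of_lt_top hWlt
    set a : ZMod p := f (1, 0) with hadef
    set b : ZMod p := f (0, 1) with hbdef
    have hfab : ∀ t : ZMod p × ZMod p, f t = t.1 * a + t.2 * b := by
      intro t
      have : t = t.1 • ((1 : ZMod p), (0 : ZMod p)) + t.2 • ((0 : ZMod p), (1 : ZMod p)) := by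
        ext <;> simp
      rw [this, map_add, _root_.map_smul, _root_.map_smul, smul_eq_mul, smul_eq_mul]
      simp [hadef, hbdef]
    have hfe : ∀ x : G, (u x) * a + (v x) * b = 0 := by
      intro x
      have hx : e x ∈ W := by
        rw [hWdef, AddSubgroup.mem_toZModSubmodule]
        exact ⟨x, rfl⟩
      have := hfker hx
      rw [LinearMap.mem_ker, hfab] at this
      simpa [hedef] using this
    -- produce the integer relation
    have hrel : ∀ x : G, γ₁ x ^ (a.val : ℤ) * γ₂ x ^ (b.val : ℤ) = 1 := by
      intro x
      rw [zpow_natCast, zpow_natCast, ← hu x, ← hv x, ← pow_mul, ← pow_mul, ← pow_add]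
      rw [hζ.pow_eq_one_iff_dvd]
      rw [← ZMod.natCast_eq_zero_iff]
      push_cast [ZMod.natCast_zmod_val]
      exact hfe x
    obtain ⟨hda, hdb⟩ := hind (a.val : ℤ) (b.val : ℤ) hrel
    have ha0 : a = 0 := by
      rw [← ZMod.val_eq_zero]
      exact Nat.eq_zero_of_dvd_of_lt (Int.natCast_dvd_natCast.mp hda) (ZMod.val_lt a)
    have hb0 : b = 0 := by
      rw [← ZMod.val_eq_zero]
      exact Nat.eq_zero_of_dvd_of_lt (Int.natCast_dvd_natCast.mp hdb) (ZMod.val_lt b)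
    apply hf0
    apply LinearMap.ext
    intro t
    rw [hfab t]
    simp [ha0, hb0]
  -- the fibers of `e`
  set T : ZMod p × ZMod p → Set G := fun t => e ⁻¹' {t} with hTdef
  have hTmeas : ∀ t, MeasurableSet (T t) := by
    intro t
    have : T t = γ₁ ⁻¹' {ζ ^ t.1.val} ∩ γ₂ ⁻¹' {ζ ^ t.2.val} := by
      ext x
      simp only [hTdef, Set.mem_preimage, Set.mem_singleton_iff, Set.mem_inter_iff]
      exact hfiber x t
    rw [this]
    exact ((isClosed_singleton.preimage hc₁).measurableSet).inter
      ((isClosed_singleton.preimage hc₂).measurableSet)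
  have hTdisj : Pairwise (Function.onFun Disjoint T) := by
    intro s t hst
    apply Set.disjoint_left.mpr
    intro x hx hx'
    exact hst (hx.symm.trans hx')
  have hTunion : (⋃ t, T t) = Set.univ := by
    ext x
    simp only [Set.mem_iUnion, Set.mem_univ, iff_true]
    exact ⟨e x, rfl⟩
  have hTm : ∀ t, m (T t) = m (T 0) := by
    intro t
    obtain ⟨g, hg⟩ := hsurj t
    have hpre : (fun x => g + x) ⁻¹' T t = T 0 := by
      ext x
      simp only [hTdef, Set.mem_preimage, Set.mem_singleton_iff, he_add g x, hg,
        add_eq_left]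
    rw [← hpre, measure_preimage_add]
  -- counting : p² · m (T 0) = 1
  have hmul : ((p : ℝ≥0∞) * (p : ℝ≥0∞)) * m (T 0) = 1 := by
    have h1 : m (⋃ t, T t) = ∑' t, m (T t) := measure_iUnion hTdisj hTmeas
    rw [hTunion, measure_univ] at h1
    have h2 : (∑' t : ZMod p × ZMod p, m (T t))
        = ((Fintype.card (ZMod p × ZMod p) : ℕ) : ℝ≥0∞) * m (T 0) := by
      rw [tsum_fintype]
      simp_rw [fun t => hTm t]
      rw [Finset.sum_const, Finset.card_univ, nsmul_eq_mul]
    have h3 : ((Fintype.card (ZMod p × ZMod p) : ℕ) : ℝ≥0∞) = (p : ℝ≥0∞) * p := by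
      simp [ZMod.card]
    rw [h2, h3] at h1
    exact h1.symm
  have hp0 : (p : ℝ≥0∞) ≠ 0 := by
    simp [hp.ne_zero]
  have hptop : (p : ℝ≥0∞) ≠ ⊤ := ENNReal.natCast_ne_top p
  have hmT0 : m (T 0) = (((p : ℝ≥0∞)) ^ 2)⁻¹ := by
    have h2 : ((p : ℝ≥0∞)) ^ 2 ≠ 0 := by positivity
    have h2' : ((p : ℝ≥0∞)) ^ 2 ≠ ⊤ := by
      exact ENNReal.pow_ne_top hptop
    have hmul2 : ((p : ℝ≥0∞)) ^ 2 * m (T 0) = 1 := by rw [sq]; exact hmul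
    have h4 : m (T 0) = 1 / ((p : ℝ≥0∞)) ^ 2 := (ENNReal.eq_div_iff h2 h2').mpr hmul2
    rw [h4, one_div]
  -- membership criterion for T 0
  have hmemA : ∀ y : G, y ∈ T 0 ↔ (γ₁ y = 1 ∧ γ₂ y = 1) := by
    intro y
    have := hfiber y 0
    simpa [hTdef, ZMod.val_zero] using this
  -- power-periodicity
  have hzmod : ∀ z : ℂ, z ^ p = 1 → ∀ a : ℕ, z ^ a = z ^ (a % p) := by
    intro z hz a
    conv_lhs => rw [← Nat.mod_add_div a p]
    rw [pow_add, pow_mul, hz, one_pow, mul_one]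
  refine ⟨T 0, hTmeas 0, hmT0, ?_⟩
  intro α
  have hsub : {x | ∃ k, x + N k • α ∈ T 0} ⊆
      ⋃ r ∈ Finset.range p, (fun x => r • α + x) ⁻¹' (T 0) := by
    intro x hx
    obtain ⟨k, hk⟩ := hx
    have hmem : x + (N k % p) • α ∈ T 0 := by
      rw [hmemA] at hk ⊢
      rw [hadd₁, hadd₂, hpow₁, hpow₂] at hk ⊢
      rw [← hzmod _ (hord₁ α), ← hzmod _ (hord₂ α)]
      exact hk
    apply Set.mem_biUnion (Finset.mem_range.mpr (Nat.mod_lt _ hp.pos))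
    simpa [add_comm] using hmem
  calc m {x | ∃ k, x + N k • α ∈ T 0}
      ≤ m (⋃ r ∈ Finset.range p, (fun x => r • α + x) ⁻¹' (T 0)) := measure_mono hsub
    _ ≤ ∑ r ∈ Finset.range p, m ((fun x => r • α + x) ⁻¹' (T 0)) :=
        measure_biUnion_finset_le _ _
    _ = ∑ r ∈ Finset.range p, (((p : ℝ≥0∞)) ^ 2)⁻¹ := by
        refine Finset.sum_congr rfl fun r _ => ?_
        rw [measure_preimage_add, hmT0]
    _ = (p : ℝ≥0∞) * (((p : ℝ≥0∞)) ^ 2)⁻¹ := by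
        rw [Finset.sum_const, Finset.card_range, nsmul_eq_mul]
    _ = (p : ℝ≥0∞)⁻¹ := by
        rw [sq, ENNReal.mul_inv (Or.inl hp0) (Or.inl hptop), ← mul_assoc,
          ENNReal.mul_inv_cancel hp0 hptop, one_mul]

end Aux

/-- **Theorem (multiple torsion of type (ii)).**
If for infinitely many distinct primes `p` the dual group of the compact Hausdorff abelian
group `G` contains two independent continuous characters of order exactly `p` (i.e. a
subgroup isomorphic to `(ℤ/pℤ) × (ℤ/pℤ)`), then for every strictly increasing sequence
`(n k)` of naturals there is a measurable `f ∉ L¹(G, m)` with `Γ_{f,0} = G`. -/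
theorem exists_nonintegrable_with_full_tail_rotation_set_of_many_primes_torsion
    {G : Type*} [AddCommGroup G] [TopologicalSpace G] [IsTopologicalAddGroup G]
    [CompactSpace G] [T2Space G] [MeasurableSpace G] [BorelSpace G]
    (m : Measure G) [m.IsAddHaarMeasure] [IsProbabilityMeasure m]
    (htor : ∀ N : ℕ, ∃ p : ℕ, N < p ∧ p.Prime ∧
      ∃ γ₁ γ₂ : G → ℂ,
        Continuous γ₁ ∧ Continuous γ₂ ∧
        (∀ x y, γ₁ (x + y) = γ₁ x * γ₁ y) ∧ (∀ x y, γ₂ (x + y) = γ₂ x * γ₂ y) ∧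
        (∀ x, ‖γ₁ x‖ = 1) ∧ (∀ x, ‖γ₂ x‖ = 1) ∧
        (∀ x, γ₁ x ^ p = 1) ∧ (∀ x, γ₂ x ^ p = 1) ∧
        (∃ x, γ₁ x ≠ 1) ∧ (∃ x, γ₂ x ≠ 1) ∧
        (∀ a b : ℤ, (∀ x, γ₁ x ^ a * γ₂ x ^ b = 1) → (p : ℤ) ∣ a ∧ (p : ℤ) ∣ b))
    (n : ℕ → ℕ) (hn : StrictMono n) :
    ∃ f : G → ℝ, Measurable f ∧ ¬ Integrable f m ∧
      ∀ α : G, ∀ᵐ x ∂m,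
        Tendsto (fun k : ℕ => f (x + n k • α) / (k : ℝ)) atTop (nhds 0) := by
  classical
  -- choose, for each `j`, a prime `p j > 2 ^ j` and the associated joint kernel `A j`
  have KEY : ∀ j : ℕ, ∃ (p : ℕ) (A : Set G), 2 ^ j < p ∧ p.Prime ∧ MeasurableSet A ∧
      m A = (((p : ℝ≥0∞)) ^ 2)⁻¹ ∧
      ∀ α : G, m {x | ∃ k, x + n k • α ∈ A} ≤ (p : ℝ≥0∞)⁻¹ := by
    intro j
    obtain ⟨p, hpj, hp, γ₁, γ₂, hc₁, hc₂, hadd₁, hadd₂, _, _, hord₁, hord₂, _, _, hind⟩ :=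
      htor (2 ^ j)
    obtain ⟨A, hAmeas, hAm, hAbad⟩ :=
      key_lemma m p hp γ₁ γ₂ hc₁ hc₂ hadd₁ hadd₂ hord₁ hord₂ hind n
    exact ⟨p, A, hpj, hp, hAmeas, hAm, hAbad⟩
  choose p A hp2 hp hAmeas hAm hAbad using KEY
  have hp0 : ∀ j, (p j : ℝ≥0∞) ≠ 0 := fun j => by
    simp [(hp j).ne_zero]
  have hptop : ∀ j, (p j : ℝ≥0∞) ≠ ⊤ := fun j => ENNReal.natCast_ne_top _
  -- summable bounds
  have hpinv : ∀ j, (p j : ℝ≥0∞)⁻¹ ≤ 2⁻¹ ^ j := by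
    intro j
    rw [← ENNReal.inv_pow]
    refine ENNReal.inv_le_inv.mpr ?_
    have : ((2 : ℕ) ^ j : ℝ≥0∞) ≤ (p j : ℝ≥0∞) := by
      exact_mod_cast Nat.cast_le.mpr (hp2 j).le
    simpa using this
  have hA_le : ∀ j, m (A j) ≤ 2⁻¹ ^ j := by
    intro j
    rw [hAm j]
    refine le_trans ?_ (hpinv j)
    refine ENNReal.inv_le_inv.mpr ?_
    exact le_self_pow₀ (by
      have : (1 : ℝ≥0∞) ≤ (p j : ℝ≥0∞) := by
        exact_mod_cast Nat.one_le_cast.mpr (hp j).one_lt.le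
      exact this) two_ne_zero
  have hgeo : (∑' j : ℕ, (2⁻¹ : ℝ≥0∞) ^ j) ≠ ∞ := by
    rw [ENNReal.tsum_geometric, ENNReal.one_sub_inv_two, inv_inv]
    exact ENNReal.ofNat_ne_top
  -- the function
  set c : ℕ → ℝ≥0∞ := fun j => ((p j : ℝ≥0∞)) ^ 2 with hcdef
  have hc0 : ∀ j, c j ≠ 0 := fun j => pow_ne_zero _ (hp0 j)
  have hcTop : ∀ j, c j ≠ ∞ := fun j => ENNReal.pow_ne_top (hptop j)
  set F : G → ℝ≥0∞ := fun x => ∑' j, (A j).indicator (fun _ => c j) x with hFdef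
  have hFmeas : Measurable F :=
    Measurable.ennreal_tsum fun j => measurable_const.indicator (hAmeas j)
  set f : G → ℝ := fun x => (F x).toReal with hfdef
  have hfmeas : Measurable f := hFmeas.ennreal_toReal
  -- a bound on F from eventual non-membership
  have hFbound : ∀ (x : G) (J : ℕ), (∀ j, J ≤ j → x ∉ A j) →
      F x ≤ ∑ j ∈ Finset.range J, c j := by
    intro x J hx
    have hzero : ∀ j ∉ Finset.range J, (A j).indicator (fun _ => c j) x = 0 := by
      intro j hj
      exact Set.indicator_of_notMem (hx j (by simpa using hj)) _
    calc F x = ∑ j ∈ Finset.range J, (A j).indicator (fun _ => c j) x := tsum_eq_sum hzero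
      _ ≤ ∑ j ∈ Finset.range J, c j := by
          refine Finset.sum_le_sum fun j _ => ?_
          by_cases hxj : x ∈ A j <;> simp [hxj]
  have hsumrange : ∀ J : ℕ, (∑ j ∈ Finset.range J, c j) ≠ ∞ := by
    intro J
    exact (ENNReal.sum_lt_top.mpr fun j _ => (hcTop j).lt_top).ne
  -- the integral of F is infinite
  have hFint : ∫⁻ x, F x ∂m = ∞ := by
    rw [hFdef]
    rw [lintegral_tsum fun j => (measurable_const.indicator (hAmeas j)).aemeasurable]
    have hone : ∀ j : ℕ, ∫⁻ x, (A j).indicator (fun _ => c j) x ∂m = 1 := by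
      intro j
      rw [lintegral_indicator_const (hAmeas j), hAm j, hcdef]
      exact ENNReal.mul_inv_cancel (hc0 j) (hcTop j)
    simp_rw [hone]
    exact ENNReal.tsum_const_eq_top_of_ne_zero one_ne_zero
  -- F is a.e. finite
  have hFae : ∀ᵐ x ∂m, F x ≠ ∞ := by
    have hsum : (∑' j, m (A j)) ≠ ∞ :=
      ((ENNReal.tsum_le_tsum hA_le).trans_lt (lt_top_iff_ne_top.mpr hgeo)).ne
    filter_upwards [MeasureTheory.ae_eventually_notMem hsum] with x hx
    obtain ⟨J, hJ⟩ := eventually_atTop.mp hx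
    exact ((hFbound x J hJ).trans_lt (lt_top_iff_ne_top.mpr (hsumrange J))).ne
  -- f is not integrable
  have hnotint : ¬ Integrable f m := by
    intro hint
    have := (hasFiniteIntegral_toReal_iff hFae).mp hint.2
    exact this hFint
  refine ⟨f, hfmeas, hnotint, ?_⟩
  -- the tail property
  intro α
  set B : ℕ → Set G := fun j => {x | ∃ k, x + n k • α ∈ A j} with hBdef
  have hBsum : (∑' j, m (B j)) ≠ ∞ := by
    refine ((ENNReal.tsum_le_tsum fun j => (hAbad j α).trans (hpinv j)).trans_lt
      (lt_top_iff_ne_top.mpr hgeo)).ne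
  filter_upwards [MeasureTheory.ae_eventually_notMem hBsum] with x hx
  obtain ⟨J, hJ⟩ := eventually_atTop.mp hx
  set C : ℝ≥0∞ := ∑ j ∈ Finset.range J, c j with hCdef
  have hbnd : ∀ k : ℕ, f (x + n k • α) ≤ C.toReal := by
    intro k
    refine ENNReal.toReal_mono (hsumrange J) ?_
    refine hFbound (x + n k • α) J ?_
    intro j hj hmem
    exact hJ j hj ⟨k, hmem⟩
  refine squeeze_zero (fun k => div_nonneg ENNReal.toReal_nonneg (Nat.cast_nonneg k))
    (fun k => ?_) (tendsto_const_div_atTop_nhds_zero_nat C.toReal)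
  rw [div_eq_mul_inv, div_eq_mul_inv]
  exact mul_le_mul_of_nonneg_right (hbnd k) (inv_nonneg.mpr (Nat.cast_nonneg k))
end

section
/- Let G be a compact Hausdorff Abelian topological group with Haar probability measure m whose dual group contains infinitely many multiple torsion, and let (n_k)_{k≥0} be a strictly increasing sequence of natural numbers that is ergodic for periodic systems. Then there exists a measurable function f : G → ℝ with f ∉ L¹(G,m) such that Γ_f = G, i.e. for every α ∈ G, for m-a.e. x, the averages M_N^α f(x) = (1/(N+1)) · Σ_{k=0}^N f(x + n_k·α) converge as N → ∞. -/
open MeasureTheory Filter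
open scoped ENNReal

set_option linter.unusedSectionVars false
set_option linter.unusedVariables false
set_option maxHeartbeats 1000000

section Aux

variable {G : Type*} [AddCommGroup G] [TopologicalSpace G] [IsTopologicalAddGroup G]
    [CompactSpace G] [T2Space G] [MeasurableSpace G] [BorelSpace G]
    (m : Measure G) [m.IsAddHaarMeasure] [IsProbabilityMeasure m]

lemma aux_cont_integrable {f : G → ℂ} (hf : Continuous f) : Integrable f m :=
  hf.integrable_of_hasCompactSupport (HasCompactSupport.of_compactSpace f)

lemma aux_char_integral_zero {γ : G → ℂ} (hc : Continuous γ)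
    (hhom : ∀ x y, γ (x + y) = γ x * γ y) (hnt : ∃ t, γ t ≠ 1) :
    ∫ x, γ x ∂m = 0 := by
  obtain ⟨t, ht⟩ := hnt
  have h1 : ∫ x, γ (x + t) ∂m = ∫ x, γ x ∂m := integral_add_right_eq_self γ t
  have h2 : ∫ x, γ (x + t) ∂m = (∫ x, γ x ∂m) * γ t := by
    simp_rw [hhom]
    exact integral_mul_const (γ t) γ
  have h3 : (∫ x, γ x ∂m) * γ t = ∫ x, γ x ∂m := h2 ▸ h1
  by_contra hne
  exact ht (mul_left_cancel₀ hne (by rw [mul_one]; exact h3))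

lemma aux_indep_level_set {ι : Type} [Fintype ι] [DecidableEq ι] (p : ℕ) (hp : 0 < p)
    (γ : ι → G → ℂ) (hc : ∀ i, Continuous (γ i))
    (hhom : ∀ i x y, γ i (x + y) = γ i x * γ i y)
    (hord : ∀ i x, γ i x ^ p = 1)
    (hnt : ∀ a : ι → ℕ, (∀ i, a i < p) → a ≠ 0 → ∃ x, ∏ i, γ i x ^ a i ≠ 1) :
    m {x | ∀ i, γ i x = 1} = ((p : ℝ≥0∞))⁻¹ ^ (Fintype.card ι) := by
  set S : Set G := {x | ∀ i, γ i x = 1} with hS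
  have hSc : IsClosed S := by
    have : S = ⋂ i, (γ i) ⁻¹' {1} := by ext x; simp [hS, Set.mem_iInter]
    rw [this]
    exact isClosed_iInter fun i => (isClosed_singleton).preimage (hc i)
  have hSm : MeasurableSet S := hSc.measurableSet
  have key : ∀ x : G, (∏ i, ∑ t ∈ Finset.range p, γ i x ^ t)
      = S.indicator (fun _ => (p : ℂ) ^ Fintype.card ι) x := by
    intro x
    by_cases hx : x ∈ S
    · rw [Set.indicator_of_mem hx]
      rw [Finset.prod_congr rfl (fun i _ => ?_)]
      · rw [Finset.prod_const, Finset.card_univ]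
      · have h1 : γ i x = 1 := hx i
        simp [h1]
    · rw [Set.indicator_of_notMem hx]
      have : ∃ i, γ i x ≠ 1 := by
        by_contra hcon
        push_neg at hcon
        exact hx hcon
      obtain ⟨i0, hi0⟩ := this
      refine Finset.prod_eq_zero (Finset.mem_univ i0) ?_
      rw [geom_sum_eq hi0, hord i0 x, sub_self, zero_div]
  have hint0 : ∀ a : ι → ℕ, (∀ i, a i < p) → a ≠ 0 →
      ∫ x, ∏ i, γ i x ^ a i ∂m = 0 := by
    intro a ha hane
    refine aux_char_integral_zero m ?_ ?_ (hnt a ha hane)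
    · exact continuous_finset_prod _ fun i _ => (hc i).pow _
    · intro x y
      simp_rw [hhom, mul_pow, Finset.prod_mul_distrib]
  have expand : ∫ x, (∏ i, ∑ t ∈ Finset.range p, γ i x ^ t) ∂m
      = ∑ a ∈ Fintype.piFinset (fun _ : ι => Finset.range p), ∫ x, ∏ i, γ i x ^ a i ∂m := by
    simp_rw [Finset.prod_univ_sum]
    refine integral_finset_sum _ fun a _ => aux_cont_integrable m ?_
    exact continuous_finset_prod _ fun i _ => (hc i).pow _
  have hzero_mem : (0 : ι → ℕ) ∈ Fintype.piFinset (fun _ : ι => Finset.range p) := by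
    simp [Fintype.mem_piFinset, hp]
  have hsum : ∑ a ∈ Fintype.piFinset (fun _ : ι => Finset.range p),
      ∫ x, ∏ i, γ i x ^ a i ∂m = 1 := by
    rw [Finset.sum_eq_single_of_mem (0 : ι → ℕ) hzero_mem]
    · simp
    · intro a ha hane
      refine hint0 a (fun i => ?_) hane
      exact Finset.mem_range.mp (Fintype.mem_piFinset.mp ha i)
  have hindint : ∫ x, S.indicator (fun _ => (p : ℂ) ^ Fintype.card ι) x ∂m
      = (m S).toReal • ((p : ℂ) ^ Fintype.card ι) := integral_indicator_const _ hSm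
  have main : ((m S).toReal : ℂ) * (p : ℂ) ^ Fintype.card ι = 1 := by
    have := (integral_congr_ae (Filter.Eventually.of_forall key)).symm.trans (expand.trans hsum)
    rwa [hindint, Complex.real_smul] at this
  have hpc : ((p : ℂ)) ^ Fintype.card ι ≠ 0 :=
    pow_ne_zero _ (Nat.cast_ne_zero.mpr hp.ne')
  have htoReal : (m S).toReal = ((p : ℝ))⁻¹ ^ Fintype.card ι := by
    have : ((m S).toReal : ℂ) = ((p : ℂ))⁻¹ ^ Fintype.card ι := by
      field_simp
      field_simp at main
      rw [div_pow, one_pow, eq_div_iff hpc]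
      exact main
    refine Complex.ofReal_inj.mp (this.trans ?_)
    push_cast
    ring
  have hfin : m S ≠ ⊤ := measure_ne_top m S
  rw [← ENNReal.ofReal_toReal hfin, htoReal]
  rw [ENNReal.ofReal_pow (by positivity)]
  congr 1
  rw [ENNReal.ofReal_inv_of_pos (by positivity), ENNReal.ofReal_natCast]

/-- The mod-`q` averaging lemma. -/
lemma aux_avg_mod_tendsto (n : ℕ → ℕ)
    (hErg : ∀ q : ℕ, 0 < q → ∀ h : ℕ,
      Tendsto (fun N : ℕ =>
          (((Finset.range (N + 1)).filter (fun k => n k % q = h % q)).card : ℝ) / (N + 1))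
        atTop (nhds (1 / (q : ℝ))))
    (q : ℕ) (hq : 0 < q) (v : ℕ → ℝ) :
    Tendsto (fun N : ℕ => (∑ k ∈ Finset.range (N + 1), v (n k % q)) / (N + 1 : ℝ))
      atTop (nhds (∑ r ∈ Finset.range q, v r / q)) := by
  have hsum : ∀ N : ℕ, (∑ k ∈ Finset.range (N + 1), v (n k % q))
      = ∑ r ∈ Finset.range q,
          (((Finset.range (N + 1)).filter (fun k => n k % q = r)).card : ℝ) * v r := by
    intro N
    rw [← Finset.sum_fiberwise_of_maps_to (g := fun k => n k % q)
      (fun k _ => Finset.mem_range.mpr (Nat.mod_lt _ hq)) (fun k => v (n k % q))]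
    refine Finset.sum_congr rfl fun r _ => ?_
    rw [Finset.sum_congr rfl (fun k hk => by
      rw [(Finset.mem_filter.mp hk).2]), Finset.sum_const, nsmul_eq_mul]
  have hlim : Tendsto (fun N : ℕ => ∑ r ∈ Finset.range q,
      ((((Finset.range (N + 1)).filter (fun k => n k % q = r)).card : ℝ) / (N + 1)) * v r)
      atTop (nhds (∑ r ∈ Finset.range q, v r / q)) := by
    refine tendsto_finset_sum _ fun r hr => ?_
    have hr' : r % q = r := Nat.mod_eq_of_lt (Finset.mem_range.mp hr)
    have := (hErg q hq r).mul_const (v r)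
    simp only [hr'] at this
    convert this using 2
    rw [one_div, div_eq_mul_inv, mul_comm]
  refine hlim.congr fun N => ?_
  rw [hsum, Finset.sum_div]
  refine Finset.sum_congr rfl fun r _ => ?_
  ring

lemma aux_char_zero {γ : G → ℂ} (hhom : ∀ x y, γ (x + y) = γ x * γ y)
    (hnorm : ∀ x, ‖γ x‖ = 1) : γ 0 = 1 := by
  have hne : γ 0 ≠ 0 := by
    intro h; have := hnorm 0; rw [h] at this; simp at this
  have h := hhom 0 0
  rw [add_zero] at h
  have : γ 0 * 1 = γ 0 * γ 0 := by rw [mul_one]; exact h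
  exact (mul_left_cancel₀ hne this).symm

lemma aux_char_nsmul {γ : G → ℂ} (hhom : ∀ x y, γ (x + y) = γ x * γ y)
    (hnorm : ∀ x, ‖γ x‖ = 1) (α : G) (c : ℕ) : γ (c • α) = γ α ^ c := by
  induction c with
  | zero => simp [aux_char_zero hhom hnorm]
  | succ c ih => rw [succ_nsmul, hhom, ih, pow_succ]

lemma aux_char_orbit {γ : G → ℂ} (hhom : ∀ x y, γ (x + y) = γ x * γ y)
    (hnorm : ∀ x, ‖γ x‖ = 1) {p : ℕ} (hp : 0 < p) (α : G) (hα : γ α ^ p = 1) (x : G) (c : ℕ) :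
    γ (x + c • α) = γ (x + (c % p) • α) := by
  rw [hhom, hhom, aux_char_nsmul hhom hnorm, aux_char_nsmul hhom hnorm]
  congr 1
  conv_lhs => rw [← Nat.div_add_mod c p]
  rw [pow_add, pow_mul, hα, one_pow, one_mul]

/-- evaluation of the truncated tsum -/
lemma aux_F_eval (B : ℕ → Set G) (c : ℕ → ℝ≥0∞) (hcne : ∀ j, c j ≠ ⊤) (y : G) (M : ℕ)
    (hy : ∀ j, M ≤ j → y ∉ B j) :
    (∑' j, (B j).indicator (fun _ => c j) y).toReal
      = ∑ j ∈ Finset.range M, (B j).indicator (fun _ => (c j).toReal) y := by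
  have hvanish : ∀ j ∉ Finset.range M, (B j).indicator (fun _ => c j) y = 0 := by
    intro j hj
    exact Set.indicator_of_notMem (hy j (le_of_not_gt (fun hlt => hj (Finset.mem_range.mpr hlt)))) _
  rw [tsum_eq_sum hvanish, ENNReal.toReal_sum (fun j _ => ?_)]
  · refine Finset.sum_congr rfl fun j _ => ?_
    by_cases hmem : y ∈ B j
    · rw [Set.indicator_of_mem hmem, Set.indicator_of_mem hmem]
    · rw [Set.indicator_of_notMem hmem, Set.indicator_of_notMem hmem, ENNReal.toReal_zero]
  · by_cases hmem : y ∈ B j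
    · rw [Set.indicator_of_mem hmem]; exact hcne j
    · rw [Set.indicator_of_notMem hmem]; exact ENNReal.zero_ne_top

lemma aux_F_ne_top (B : ℕ → Set G) (c : ℕ → ℝ≥0∞) (hcne : ∀ j, c j ≠ ⊤) (y : G) (M : ℕ)
    (hy : ∀ j, M ≤ j → y ∉ B j) :
    (∑' j, (B j).indicator (fun _ => c j) y) ≠ ⊤ := by
  have hvanish : ∀ j ∉ Finset.range M, (B j).indicator (fun _ => c j) y = 0 := by
    intro j hj
    exact Set.indicator_of_notMem (hy j (le_of_not_gt (fun hlt => hj (Finset.mem_range.mpr hlt)))) _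
  rw [tsum_eq_sum hvanish]
  refine (ENNReal.sum_lt_top.mpr fun j _ => ?_).ne
  by_cases hmem : y ∈ B j
  · rw [Set.indicator_of_mem hmem]; exact (hcne j).lt_top
  · rw [Set.indicator_of_notMem hmem]; exact ENNReal.zero_lt_top

/-- the constructed function is not integrable -/
lemma aux_not_integrable (B : ℕ → Set G) (hBm : ∀ j, MeasurableSet (B j)) (c : ℕ → ℝ≥0∞)
    (hcne : ∀ j, c j ≠ ⊤) (hdiv : (∑' j, c j * m (B j)) = ⊤)
    (hfin : ∀ᵐ x ∂m, ∃ M : ℕ, ∀ j, M ≤ j → x ∉ B j) :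
    ¬ Integrable (fun x => (∑' j, (B j).indicator (fun _ => c j) x).toReal) m := by
  intro hInt
  have hae : ∀ᵐ x ∂m,
      ‖(∑' j, (B j).indicator (fun _ => c j) x).toReal‖ₑ
        = ∑' j, (B j).indicator (fun _ => c j) x := by
    filter_upwards [hfin] with x hx
    obtain ⟨M, hM⟩ := hx
    rw [Real.enorm_eq_ofReal ENNReal.toReal_nonneg,
      ENNReal.ofReal_toReal (aux_F_ne_top B c hcne x M hM)]
  have hlt := hInt.2
  rw [HasFiniteIntegral, lintegral_congr_ae hae] at hlt
  have : ∫⁻ x, ∑' j, (B j).indicator (fun _ => c j) x ∂m = ∑' j, c j * m (B j) := by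
    rw [lintegral_tsum (fun j => (measurable_const.indicator (hBm j)).aemeasurable)]
    refine tsum_congr fun j => ?_
    rw [lintegral_indicator_const (hBm j)]
  rw [this, hdiv] at hlt
  exact absurd hlt (lt_irrefl _)

end Aux

/-- **Theorem (ergodic sequences and multiple torsion).**
Suppose the dual group of the compact Hausdorff abelian group `G` contains infinitely many
multiple torsion: either (i) there is a prime `p` and a countable independent family of
continuous characters of order exactly `p`, or (ii) for infinitely many distinct primes `p`
the dual contains two independent continuous characters of order exactly `p`. If `(n k)` is a
strictly increasing sequence of naturals which is ergodic for periodic systems, then there is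
a measurable `f ∉ L¹(G, m)` such that `Γ_f = G`: for every `α`, the nonconventional Birkhoff
averages `(1/(N+1)) ∑_{k=0}^N f (x + n_k • α)` converge for a.e. `x`. -/
theorem exists_nonintegrable_with_full_rotation_set_of_multiple_torsion
    {G : Type*} [AddCommGroup G] [TopologicalSpace G] [IsTopologicalAddGroup G]
    [CompactSpace G] [T2Space G] [MeasurableSpace G] [BorelSpace G]
    (m : Measure G) [m.IsAddHaarMeasure] [IsProbabilityMeasure m]
    (htor :
      (∃ p : ℕ, p.Prime ∧ ∃ γ : ℕ → G → ℂ,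
        (∀ i, Continuous (γ i)) ∧
        (∀ i x y, γ i (x + y) = γ i x * γ i y) ∧
        (∀ i x, ‖γ i x‖ = 1) ∧
        (∀ i x, γ i x ^ p = 1) ∧
        (∀ i, ∃ x, γ i x ≠ 1) ∧
        (∀ (s : Finset ℕ) (a : ℕ → ℤ),
          (∀ x, ∏ i ∈ s, γ i x ^ a i = 1) → ∀ i ∈ s, (p : ℤ) ∣ a i)) ∨
      (∀ N : ℕ, ∃ p : ℕ, N < p ∧ p.Prime ∧
        ∃ γ₁ γ₂ : G → ℂ,
          Continuous γ₁ ∧ Continuous γ₂ ∧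
          (∀ x y, γ₁ (x + y) = γ₁ x * γ₁ y) ∧ (∀ x y, γ₂ (x + y) = γ₂ x * γ₂ y) ∧
          (∀ x, ‖γ₁ x‖ = 1) ∧ (∀ x, ‖γ₂ x‖ = 1) ∧
          (∀ x, γ₁ x ^ p = 1) ∧ (∀ x, γ₂ x ^ p = 1) ∧
          (∃ x, γ₁ x ≠ 1) ∧ (∃ x, γ₂ x ≠ 1) ∧
          (∀ a b : ℤ, (∀ x, γ₁ x ^ a * γ₂ x ^ b = 1) → (p : ℤ) ∣ a ∧ (p : ℤ) ∣ b)))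
    (n : ℕ → ℕ) (hn : StrictMono n)
    (hErg : ∀ q : ℕ, 0 < q → ∀ h : ℕ,
      Tendsto (fun N : ℕ =>
          (((Finset.range (N + 1)).filter (fun k => n k % q = h % q)).card : ℝ) / (N + 1))
        atTop (nhds (1 / (q : ℝ)))) :
    ∃ f : G → ℝ, Measurable f ∧ ¬ Integrable f m ∧
      ∀ α : G, ∀ᵐ x ∂m, ∃ L : ℝ,
        Tendsto (fun N : ℕ => (∑ k ∈ Finset.range (N + 1), f (x + n k • α)) / (N + 1 : ℝ))
          atTop (nhds L) := by
  rcases htor with ⟨p, hpprime, γ, hc, hhom, hnorm, hord, hntriv, hind⟩ | h2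
  · -- Case (i)
    have hppos : 0 < p := hpprime.pos
    have hpne : (p : ℝ≥0∞) ≠ 0 := by exact_mod_cast hppos.ne'
    have hpnetop : (p : ℝ≥0∞) ≠ ⊤ := ENNReal.natCast_ne_top p
    set B : ℕ → Set G := fun j => {x | ∀ i : Fin j, γ (i : ℕ) x = 1} with hB
    have hBclosed : ∀ j, IsClosed (B j) := by
      intro j
      have : B j = ⋂ i : Fin j, (γ (i : ℕ)) ⁻¹' {1} := by
        ext x; simp [hB, Set.mem_iInter]
      rw [this]
      exact isClosed_iInter fun i => isClosed_singleton.preimage (hc _)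
    have hBmeas : ∀ j, MeasurableSet (B j) := fun j => (hBclosed j).measurableSet
    have hBanti : ∀ {j j' : ℕ}, j ≤ j' → B j' ⊆ B j := by
      intro j j' hle x hx i
      exact hx ⟨(i : ℕ), lt_of_lt_of_le i.isLt hle⟩
    have hmB : ∀ j, m (B j) = ((p : ℝ≥0∞))⁻¹ ^ j := by
      intro j
      have hnt : ∀ a : Fin j → ℕ, (∀ i, a i < p) → a ≠ 0 →
          ∃ x, ∏ i : Fin j, γ (i : ℕ) x ^ a i ≠ 1 := by
        intro a ha hane
        by_contra hcon
        push_neg at hcon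
        set A : ℕ → ℤ := fun i => if h : i < j then (a ⟨i, h⟩ : ℤ) else 0 with hA
        have hallone : ∀ x, ∏ i ∈ Finset.range j, γ i x ^ A i = 1 := by
          intro x
          rw [← Fin.prod_univ_eq_prod_range (fun i => γ i x ^ A i) j]
          rw [← hcon x]
          refine Finset.prod_congr rfl fun i _ => ?_
          have : A (i : ℕ) = (a i : ℤ) := by
            rw [hA]; simp [i.isLt]
          rw [this, zpow_natCast]
        have hdvd := hind (Finset.range j) A hallone
        have hzero : ∀ i : Fin j, a i = 0 := by
          intro i
          have h1 := hdvd (i : ℕ) (Finset.mem_range.mpr i.isLt)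
          rw [hA] at h1
          simp only [i.isLt, dif_pos] at h1
          have h2 : p ∣ a i := by exact_mod_cast h1
          by_contra hane2
          exact absurd (ha i) (not_lt.mpr (Nat.le_of_dvd (Nat.pos_of_ne_zero hane2) h2))
        exact hane (funext hzero)
      have := aux_indep_level_set m p hppos (fun i : Fin j => γ (i : ℕ))
        (fun i => hc _) (fun i => hhom _) (fun i => hord _) hnt
      simpa [Fintype.card_fin] using this
    set F : G → ℝ≥0∞ := fun x => ∑' j, (B j).indicator (fun _ => (p : ℝ≥0∞) ^ j) x with hF
    have hc_ne : ∀ j : ℕ, ((p : ℝ≥0∞) ^ j) ≠ ⊤ := fun j => ENNReal.pow_ne_top hpnetop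
    have hdiv : (∑' j, ((p : ℝ≥0∞) ^ j) * m (B j)) = ⊤ := by
      have : ∀ j : ℕ, ((p : ℝ≥0∞) ^ j) * m (B j) = 1 := by
        intro j
        rw [hmB j, ← mul_pow, ENNReal.mul_inv_cancel hpne hpnetop, one_pow]
      simp_rw [this]
      exact ENNReal.tsum_const_eq_top_of_ne_zero one_ne_zero
    have hInter : m (⋂ j, B j) = 0 := by
      have hle : ∀ j, m (⋂ i, B i) ≤ ((p : ℝ≥0∞))⁻¹ ^ j := fun j =>
        (measure_mono (Set.iInter_subset B j)).trans (hmB j).le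
      have htend : Tendsto (fun j : ℕ => ((p : ℝ≥0∞))⁻¹ ^ j) atTop (nhds 0) := by
        refine ENNReal.tendsto_pow_atTop_nhds_zero_of_lt_one ?_
        rw [ENNReal.inv_lt_one]
        exact_mod_cast hpprime.one_lt
      exact le_zero_iff.mp (ge_of_tendsto' htend hle)
    have hfin : ∀ᵐ x ∂m, ∃ M : ℕ, ∀ j, M ≤ j → x ∉ B j := by
      filter_upwards [measure_eq_zero_iff_ae_notMem.mp hInter] with x hx
      rw [Set.mem_iInter] at hx
      push_neg at hx
      obtain ⟨J, hJ⟩ := hx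
      exact ⟨J, fun j hj hmem => hJ (hBanti hj hmem)⟩
    refine ⟨fun x => (F x).toReal, ?_, ?_, ?_⟩
    · exact (Measurable.ennreal_tsum fun j =>
        measurable_const.indicator (hBmeas j)).ennreal_toReal
    · exact aux_not_integrable m B hBmeas _ hc_ne hdiv hfin
    · intro α
      refine ae_of_all _ fun x => ?_
      have hmemiff : ∀ (c0 j : ℕ), (x + c0 • α ∈ B j) ↔ (x + (c0 % p) • α ∈ B j) := by
        intro c0 j
        have hval : ∀ i : ℕ, γ i (x + c0 • α) = γ i (x + (c0 % p) • α) := fun i =>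
          aux_char_orbit (hhom i) (hnorm i) hppos α (hord i α) x c0
        simp only [hB, Set.mem_setOf_eq]
        exact forall_congr' fun i => by rw [hval (i : ℕ)]
      have hFeq : ∀ c0 : ℕ, F (x + c0 • α) = F (x + (c0 % p) • α) := by
        intro c0
        refine tsum_congr fun j => ?_
        by_cases hmem : x + c0 • α ∈ B j
        · rw [Set.indicator_of_mem hmem, Set.indicator_of_mem ((hmemiff c0 j).mp hmem)]
        · rw [Set.indicator_of_notMem hmem,
            Set.indicator_of_notMem (fun hh => hmem ((hmemiff c0 j).mpr hh))]
      refine ⟨_, (aux_avg_mod_tendsto n hErg p hppos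
        (fun r => (F (x + r • α)).toReal)).congr fun N => ?_⟩
      show (∑ k ∈ Finset.range (N + 1), (F (x + (n k % p) • α)).toReal) / (N + 1 : ℝ) = _
      congr 1
      refine Finset.sum_congr rfl fun k _ => ?_
      exact congrArg ENNReal.toReal (hFeq (n k)).symm
  · -- Case (ii)
    choose p hplt hpprime γ₁ γ₂ hc1 hc2 hhom1 hhom2 hnorm1 hnorm2 hord1 hord2 hnt1 hnt2 hind
      using fun mm : ℕ => h2 (2 ^ mm)
    have hppos : ∀ mm, 0 < p mm := fun mm => (hpprime mm).pos
    have hpne : ∀ mm, (p mm : ℝ≥0∞) ≠ 0 := fun mm => by exact_mod_cast (hppos mm).ne'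
    have hpnetop : ∀ mm, (p mm : ℝ≥0∞) ≠ ⊤ := fun mm => ENNReal.natCast_ne_top _
    set Γ : ℕ → Fin 2 → G → ℂ := fun mm => ![γ₁ mm, γ₂ mm] with hΓ
    have hΓc : ∀ mm i, Continuous (Γ mm i) := by
      intro mm i
      fin_cases i
      · exact hc1 mm
      · exact hc2 mm
    have hΓhom : ∀ mm i x y, Γ mm i (x + y) = Γ mm i x * Γ mm i y := by
      intro mm i
      fin_cases i
      · exact hhom1 mm
      · exact hhom2 mm
    have hΓnorm : ∀ mm i x, ‖Γ mm i x‖ = 1 := by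
      intro mm i
      fin_cases i
      · exact hnorm1 mm
      · exact hnorm2 mm
    have hΓord : ∀ mm i x, Γ mm i x ^ (p mm) = 1 := by
      intro mm i
      fin_cases i
      · exact hord1 mm
      · exact hord2 mm
    set B : ℕ → Set G := fun mm => {x | ∀ i : Fin 2, Γ mm i x = 1} with hB
    have hBclosed : ∀ mm, IsClosed (B mm) := by
      intro mm
      have : B mm = ⋂ i : Fin 2, (Γ mm i) ⁻¹' {1} := by
        ext x; simp [hB, Set.mem_iInter]
      rw [this]
      exact isClosed_iInter fun i => isClosed_singleton.preimage (hΓc mm i)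
    have hBmeas : ∀ mm, MeasurableSet (B mm) := fun mm => (hBclosed mm).measurableSet
    have hmB : ∀ mm, m (B mm) = ((p mm : ℝ≥0∞))⁻¹ ^ 2 := by
      intro mm
      have hnt : ∀ a : Fin 2 → ℕ, (∀ i, a i < p mm) → a ≠ 0 →
          ∃ x, ∏ i : Fin 2, Γ mm i x ^ a i ≠ 1 := by
        intro a ha hane
        by_contra hcon
        push_neg at hcon
        have hall : ∀ x, γ₁ mm x ^ (a 0 : ℤ) * γ₂ mm x ^ (a 1 : ℤ) = 1 := by
          intro x
          have h := hcon x
          rw [Fin.prod_univ_two] at h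
          rw [zpow_natCast, zpow_natCast]
          exact h
        obtain ⟨hd1, hd2⟩ := hind mm _ _ hall
        have h1 : a 0 = 0 := by
          have h2 : p mm ∣ a 0 := by exact_mod_cast hd1
          by_contra hne2
          exact absurd (ha 0) (not_lt.mpr (Nat.le_of_dvd (Nat.pos_of_ne_zero hne2) h2))
        have h2 : a 1 = 0 := by
          have h2' : p mm ∣ a 1 := by exact_mod_cast hd2
          by_contra hne2
          exact absurd (ha 1) (not_lt.mpr (Nat.le_of_dvd (Nat.pos_of_ne_zero hne2) h2'))
        refine hane (funext fun i => ?_)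
        fin_cases i
        · exact h1
        · exact h2
      have := aux_indep_level_set m (p mm) (hppos mm) (Γ mm)
        (hΓc mm) (hΓhom mm) (hΓord mm) hnt
      simpa only [Fintype.card_fin] using this
    have hescape : ∀ (α x : G) (mm c0 : ℕ),
        (x + c0 • α ∈ B mm) ↔ (x + (c0 % p mm) • α ∈ B mm) := by
      intro α x mm c0
      have hval : ∀ i : Fin 2, Γ mm i (x + c0 • α) = Γ mm i (x + (c0 % p mm) • α) := fun i =>
        aux_char_orbit (hΓhom mm i) (hΓnorm mm i) (hppos mm) α (hΓord mm i α) x c0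
      simp only [hB, Set.mem_setOf_eq]
      exact forall_congr' fun i => by rw [hval i]
    set F : G → ℝ≥0∞ := fun x => ∑' mm, (B mm).indicator (fun _ => (p mm : ℝ≥0∞) ^ 2) x with hF
    have hc_ne : ∀ mm : ℕ, ((p mm : ℝ≥0∞) ^ 2) ≠ ⊤ := fun mm => ENNReal.pow_ne_top (hpnetop mm)
    have hdiv : (∑' mm, ((p mm : ℝ≥0∞) ^ 2) * m (B mm)) = ⊤ := by
      have : ∀ mm : ℕ, ((p mm : ℝ≥0∞) ^ 2) * m (B mm) = 1 := by
        intro mm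
        rw [hmB mm, ← mul_pow, ENNReal.mul_inv_cancel (hpne mm) (hpnetop mm), one_pow]
      simp_rw [this]
      exact ENNReal.tsum_const_eq_top_of_ne_zero one_ne_zero
    have hgeom : (∑' mm : ℕ, ((2 : ℝ≥0∞))⁻¹ ^ mm) ≠ ⊤ := by
      rw [ENNReal.tsum_geometric]
      refine ENNReal.inv_ne_top.mpr ?_
      rw [ENNReal.one_sub_inv_two]
      simp
    have hpinv_le : ∀ mm : ℕ, ((p mm : ℝ≥0∞))⁻¹ ≤ ((2 : ℝ≥0∞))⁻¹ ^ mm := by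
      intro mm
      rw [← ENNReal.inv_pow]
      refine ENNReal.inv_le_inv' ?_
      have : ((2 : ℕ) : ℝ≥0∞) ^ mm ≤ ((p mm : ℕ) : ℝ≥0∞) := by
        rw [← Nat.cast_pow]
        exact_mod_cast (hplt mm).le
      simpa using this
    have hone_le_p : ∀ mm, (1 : ℝ≥0∞) ≤ (p mm : ℝ≥0∞) := by
      intro mm
      exact_mod_cast (hppos mm)
    have hmB_le : ∀ mm, m (B mm) ≤ ((2 : ℝ≥0∞))⁻¹ ^ mm := by
      intro mm
      rw [hmB mm]
      refine le_trans ?_ (hpinv_le mm)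
      calc ((p mm : ℝ≥0∞))⁻¹ ^ 2 = (p mm : ℝ≥0∞)⁻¹ * (p mm : ℝ≥0∞)⁻¹ := sq _
        _ ≤ (p mm : ℝ≥0∞)⁻¹ * 1 := by
            exact mul_le_mul_right (ENNReal.inv_le_one.mpr (hone_le_p mm)) _
        _ = (p mm : ℝ≥0∞)⁻¹ := mul_one _
    have hfin : ∀ᵐ x ∂m, ∃ M : ℕ, ∀ j, M ≤ j → x ∉ B j := by
      have hne : (∑' mm, m (B mm)) ≠ ⊤ :=
        ne_top_of_le_ne_top hgeom (ENNReal.tsum_le_tsum hmB_le)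
      filter_upwards [ae_eventually_notMem hne] with x hx
      rw [eventually_atTop] at hx
      exact hx
    refine ⟨fun x => (F x).toReal, ?_, ?_, ?_⟩
    · exact (Measurable.ennreal_tsum fun mm =>
        measurable_const.indicator (hBmeas mm)).ennreal_toReal
    · exact aux_not_integrable m B hBmeas _ hc_ne hdiv hfin
    · intro α
      set bad : ℕ → Set G := fun mm =>
        ⋃ r ∈ Finset.range (p mm), (fun y => y + r • α) ⁻¹' (B mm) with hbad
      have hbadle : ∀ mm, m (bad mm) ≤ ((2 : ℝ≥0∞))⁻¹ ^ mm := by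
        intro mm
        refine le_trans (measure_biUnion_finset_le _ _) ?_
        have : ∀ r ∈ Finset.range (p mm),
            m ((fun y => y + r • α) ⁻¹' (B mm)) = m (B mm) := fun r _ =>
          measure_preimage_add_right m _ _
        rw [Finset.sum_congr rfl this, Finset.sum_const, Finset.card_range, nsmul_eq_mul]
        calc (p mm : ℝ≥0∞) * m (B mm) = (p mm : ℝ≥0∞) * ((p mm : ℝ≥0∞))⁻¹ ^ 2 := by rw [hmB mm]
          _ = ((p mm : ℝ≥0∞))⁻¹ := by
              rw [sq, ← mul_assoc, ENNReal.mul_inv_cancel (hpne mm) (hpnetop mm), one_mul]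
          _ ≤ ((2 : ℝ≥0∞))⁻¹ ^ mm := hpinv_le mm
      have hbadBC : (∑' mm, m (bad mm)) ≠ ⊤ :=
        ne_top_of_le_ne_top hgeom (ENNReal.tsum_le_tsum hbadle)
      filter_upwards [ae_eventually_notMem hbadBC] with x hx
      rw [eventually_atTop] at hx
      obtain ⟨M, hM⟩ := hx
      have hxesc : ∀ mm, M ≤ mm → ∀ c0 : ℕ, x + c0 • α ∉ B mm := by
        intro mm hmm c0 hmem
        refine hM mm hmm ?_
        have hmem' : x + (c0 % p mm) • α ∈ B mm := (hescape α x mm c0).mp hmem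
        exact Set.mem_biUnion (Finset.mem_range.mpr (Nat.mod_lt _ (hppos mm))) hmem'
      have hfeval : ∀ c0 : ℕ, (F (x + c0 • α)).toReal
          = ∑ mm ∈ Finset.range M,
              (B mm).indicator (fun _ => (((p mm : ℝ≥0∞) ^ 2)).toReal) (x + c0 • α) :=
        fun c0 => aux_F_eval B _ hc_ne _ M (fun j hj => hxesc j hj c0)
      set v : ℕ → ℕ → ℝ := fun mm r =>
        (B mm).indicator (fun _ => (((p mm : ℝ≥0∞) ^ 2)).toReal) (x + r • α) with hv
      have hvper : ∀ mm c0 : ℕ,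
          (B mm).indicator (fun _ => (((p mm : ℝ≥0∞) ^ 2)).toReal) (x + c0 • α)
            = v mm (c0 % p mm) := by
        intro mm c0
        have hvr : v mm (c0 % p mm)
            = (B mm).indicator (fun _ => (((p mm : ℝ≥0∞) ^ 2)).toReal)
                (x + (c0 % p mm) • α) := rfl
        rw [hvr]
        by_cases hmem : x + c0 • α ∈ B mm
        · rw [Set.indicator_of_mem hmem, Set.indicator_of_mem ((hescape α x mm c0).mp hmem)]
        · rw [Set.indicator_of_notMem hmem,
            Set.indicator_of_notMem (fun hh => hmem ((hescape α x mm c0).mpr hh))]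
      have htend : Tendsto (fun N : ℕ => ∑ mm ∈ Finset.range M,
          (∑ k ∈ Finset.range (N + 1), v mm (n k % p mm)) / (N + 1 : ℝ)) atTop
          (nhds (∑ mm ∈ Finset.range M, ∑ r ∈ Finset.range (p mm), v mm r / (p mm : ℝ))) :=
        tendsto_finset_sum _ fun mm _ => aux_avg_mod_tendsto n hErg (p mm) (hppos mm) (v mm)
      refine ⟨_, htend.congr fun N => ?_⟩
      rw [← Finset.sum_div]
      congr 1
      rw [Finset.sum_comm]
      refine Finset.sum_congr rfl fun k _ => ?_
      rw [hfeval (n k)]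
      exact Finset.sum_congr rfl fun mm _ => (hvper mm (n k)).symm
end

section
/- Let p be a prime and ℤ_p the additive group of p-adic integers with Haar probability measure m; for a measurable f : ℤ_p → ℝ let Γ_{f,b} = {α ∈ ℤ_p : for m-a.e. x, limsup_{k→∞} |f(x + k·α)|/k < ∞}. Suppose that for every measurable function g : ℤ_p → ℝ, the existence of a measurable set B ⊆ Γ_{g,b} ∩ ℤ_p^× with m(B) > 0 (where ℤ_p^× is the set of p-adic units, i.e. those α whose first p-adic digit is nonzero) implies g ∈ L¹(ℤ_p, m). Then for every measurable function f : ℤ_p → ℝ, the existence of a measurable set B ⊆ Γ_{f,b} with m(B) > 0 implies f ∈ L¹(ℤ_p, m). -/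
open MeasureTheory Filter
open scoped ENNReal Topology NNReal

/-- **Claim (reduction to the unit case for `ℤ_p`).**
Suppose that whenever `g : ℤ_p → ℝ` is measurable and some measurable set of positive measure
is contained in `Γ_{g,b} ∩ ℤ_p^×` (the `α`'s with nonzero zeroth `p`-adic digit, i.e. `‖α‖ = 1`),
it follows that `g ∈ L¹`. Then for every measurable `f : ℤ_p → ℝ`, from the existence of a
measurable set of positive measure contained in `Γ_{f,b}` it follows that `f ∈ L¹`. -/
theorem padic_reduction_to_unit_case
    (p : ℕ) [Fact p.Prime]
    [MeasurableSpace ℤ_[p]] [BorelSpace ℤ_[p]]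
    (m : Measure ℤ_[p]) [m.IsAddHaarMeasure] [IsProbabilityMeasure m]
    (H : ∀ g : ℤ_[p] → ℝ, Measurable g →
      ∀ B : Set ℤ_[p], MeasurableSet B → 0 < m B →
      B ⊆ {α : ℤ_[p] | ∀ᵐ x ∂m,
        limsup (fun k : ℕ => ENNReal.ofReal |g (x + k • α)| / (k : ℝ≥0∞)) atTop < ⊤}
          ∩ {α : ℤ_[p] | ‖α‖ = 1} →
      Integrable g m)
    (f : ℤ_[p] → ℝ) (hf : Measurable f)
    (B : Set ℤ_[p]) (hB : MeasurableSet B) (hBpos : 0 < m B)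
    (hBsub : B ⊆ {α : ℤ_[p] | ∀ᵐ x ∂m,
      limsup (fun k : ℕ => ENNReal.ofReal |f (x + k • α)| / (k : ℝ≥0∞)) atTop < ⊤}) :
    Integrable f m := by
  classical
  have hp : Fact (Nat.Prime p) := inferInstance
  -- `m` has no atoms
  haveI hnb : (𝓝[≠] (0 : ℤ_[p])).NeBot := by
    rw [← mem_closure_iff_nhdsWithin_neBot]
    have ht : Tendsto (fun n : ℕ => (p : ℤ_[p]) ^ n) atTop (nhds 0) := by
      apply tendsto_pow_atTop_nhds_zero_of_norm_lt_one
      rw [PadicInt.norm_p]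
      rw [inv_lt_one_iff₀]
      right
      exact_mod_cast hp.out.one_lt
    refine mem_closure_of_tendsto ht (Eventually.of_forall fun n => ?_)
    have : ((p : ℤ_[p]) ^ n) ≠ 0 :=
      pow_ne_zero _ (Nat.cast_ne_zero.mpr hp.out.ne_zero)
    simpa using this
  have hm0 : m {(0 : ℤ_[p])} = 0 := measure_singleton 0
  -- choose a valuation level of positive measure
  set C : ℕ → Set ℤ_[p] := fun v => B ∩ {α | ‖α‖ = (p : ℝ) ^ (-(v : ℤ))} with hC
  have hcov : B ⊆ {0} ∪ ⋃ v, C v := by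
    intro α hα
    by_cases h0 : α = 0
    · exact Or.inl (by simp [h0])
    · refine Or.inr (Set.mem_iUnion.mpr ⟨α.valuation, hα, ?_⟩)
      show ‖α‖ = _
      rw [PadicInt.norm_eq_zpow_neg_valuation h0]
  obtain ⟨v, hv⟩ : ∃ v, 0 < m (C v) := by
    by_contra h
    push_neg at h
    have h1 : m ({(0 : ℤ_[p])} ∪ ⋃ v, C v) = 0 := by
      refine le_antisymm ((measure_union_le _ _).trans ?_) zero_le
      rw [hm0, measure_iUnion_null fun v => le_zero_iff.mp (h v)]
      simp
    exact absurd (le_antisymm ((measure_mono hcov).trans h1.le) zero_le) hBpos.ne'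
  haveI : NeZero (p ^ v) := ⟨pow_ne_zero v hp.out.ne_zero⟩
  set q : ℤ_[p] := (p : ℤ_[p]) ^ v with hq
  set T : ZMod (p ^ v) → ℤ_[p] → ℤ_[p] := fun c x => ((c.val : ℤ_[p])) + q * x with hT
  have measT : ∀ c, Measurable (T c) := fun c =>
    (continuous_const.add (continuous_mul_left q)).measurable
  set κ : ℤ_[p] →+* ZMod (p ^ v) := PadicInt.toZModPow v with hκ
  have hcast : ∀ c : ZMod (p ^ v), κ ((c.val : ℤ_[p])) = c := by
    intro c
    rw [hκ, map_natCast, ZMod.natCast_val, ZMod.cast_id]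
  have hκq : κ q = 0 := by
    rw [hq, hκ, map_pow, map_natCast, ← Nat.cast_pow, ZMod.natCast_self]
  have hker : ∀ y : ℤ_[p], κ y = 0 ↔ ∃ d, y = q * d := by
    intro y
    rw [hκ, ← RingHom.mem_ker, PadicInt.ker_toZModPow, ← hq, Ideal.mem_span_singleton]
    exact dvd_def
  have hκT : ∀ c x, κ (T c x) = c := by
    intro c x
    rw [hT]
    simp only
    rw [map_add, map_mul, hκq, zero_mul, add_zero, hcast]
  -- the sum of the pushforwards under the `T c`
  set ν : Measure ℤ_[p] := ∑ c : ZMod (p ^ v), Measure.map (T c) m with hν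
  have νapp : ∀ s : Set ℤ_[p], MeasurableSet s →
      ν s = ∑ c : ZMod (p ^ v), m (T c ⁻¹' s) := by
    intro s hs
    rw [hν, Measure.finset_sum_apply]
    exact Finset.sum_congr rfl fun c _ => Measure.map_apply (measT c) hs
  haveI : ν.IsAddLeftInvariant := by
    constructor
    intro a
    ext s hs
    rw [Measure.map_apply (measurable_const_add a) hs,
      νapp _ (hs.preimage (measurable_const_add a)), νapp s hs]
    set δ : ZMod (p ^ v) := κ a with hδ
    have key : ∀ c : ZMod (p ^ v),
        m (T (c - δ) ⁻¹' ((a + ·) ⁻¹' s)) = m (T c ⁻¹' s) := by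
      intro c
      obtain ⟨d, hd⟩ : ∃ d, a + (((c - δ).val : ℤ_[p])) - ((c.val : ℤ_[p])) = q * d := by
        refine (hker _).mp ?_
        rw [map_sub, map_add, hcast, hcast, ← hδ]
        ring
      have hcomp : ∀ x, a + T (c - δ) x = T c (d + x) := by
        intro x
        rw [hT]; simp only
        linear_combination hd
      have hsets : T (c - δ) ⁻¹' ((a + ·) ⁻¹' s) = (fun x => d + x) ⁻¹' (T c ⁻¹' s) := by
        ext x
        simp only [Set.mem_preimage, hcomp x]
      rw [hsets, measure_preimage_add]
    calc ∑ c : ZMod (p ^ v), m (T c ⁻¹' ((a + ·) ⁻¹' s))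
        = ∑ c : ZMod (p ^ v), m (T ((Equiv.subRight δ) c) ⁻¹' ((a + ·) ⁻¹' s)) :=
          (Equiv.sum_comp (Equiv.subRight δ) fun c => m (T c ⁻¹' ((a + ·) ⁻¹' s))).symm
      _ = ∑ c : ZMod (p ^ v), m (T c ⁻¹' s) := Finset.sum_congr rfl fun c _ => key c
  have νuniv : ν Set.univ = (p : ℝ≥0∞) ^ v := by
    rw [νapp _ MeasurableSet.univ]
    simp only [Set.preimage_univ, measure_univ, Finset.sum_const, Finset.card_univ, ZMod.card,
      nsmul_eq_mul, mul_one]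
    push_cast
    ring
  haveI : IsFiniteMeasure ν := ⟨by rw [νuniv]; exact ENNReal.pow_lt_top (ENNReal.natCast_lt_top p)⟩
  have hνm : ν = ((p : ℝ≥0∞) ^ v) • m := by
    have h1 := Measure.isAddInvariant_eq_smul_of_compactSpace ν m
    have h2 : ((ν.addHaarScalarFactor m : NNReal) : ℝ≥0∞) = (p : ℝ≥0∞) ^ v := by
      have h3 := νuniv
      rw [h1] at h3
      rwa [Measure.smul_apply, measure_univ, ENNReal.smul_def, smul_eq_mul, mul_one] at h3
    rw [h1]
    ext s hs
    rw [Measure.smul_apply, Measure.smul_apply, ENNReal.smul_def, smul_eq_mul, smul_eq_mul, h2]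
  -- the good set of units
  have hCv : MeasurableSet (C v) :=
    hB.inter ((measurableSet_singleton _).preimage continuous_norm.measurable)
  set B' : Set ℤ_[p] := (fun β => q * β) ⁻¹' (C v) with hB'
  have hB'meas : MeasurableSet B' := hCv.preimage (continuous_mul_left q).measurable
  have hT0 : T 0 = fun x => q * x := by
    funext x
    rw [hT]; simp
  have hmB' : m B' = ν (C v) := by
    rw [νapp _ hCv, Fintype.sum_eq_single (0 : ZMod (p ^ v)) ?_, hT0, hB']
    intro c hc
    have hempty : T c ⁻¹' (C v) = ∅ := by
      ext x
      simp only [Set.mem_preimage, Set.mem_empty_iff_false, iff_false]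
      intro hx
      have h1 : ‖T c x‖ ≤ (p : ℝ) ^ (-(v : ℤ)) := le_of_eq hx.2
      rw [PadicInt.norm_le_pow_iff_mem_span_pow] at h1
      have h2 : κ (T c x) = 0 := by
        rw [hκ, ← RingHom.mem_ker, PadicInt.ker_toZModPow]
        exact h1
      rw [hκT] at h2
      exact hc h2
    rw [hempty, measure_empty]
  have hB'pos : 0 < m B' := by
    rw [hmB', hνm, Measure.smul_apply, smul_eq_mul]
    exact ENNReal.mul_pos (pow_ne_zero _ (Nat.cast_ne_zero.mpr hp.out.ne_zero)) hv.ne'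
  -- quasi-measure-preserving
  have qmp : ∀ c, Measure.QuasiMeasurePreserving (T c) m m := by
    intro c
    refine ⟨measT c, Measure.AbsolutelyContinuous.mk fun s hs hs0 => ?_⟩
    rw [Measure.map_apply (measT c) hs]
    have hle : m (T c ⁻¹' s) ≤ ν s := by
      rw [νapp s hs]
      exact Finset.single_le_sum (f := fun c => m (T c ⁻¹' s))
        (fun i _ => zero_le) (Finset.mem_univ c)
    rw [hνm, Measure.smul_apply, smul_eq_mul, hs0, mul_zero] at hle
    exact le_zero_iff.mp hle
  -- integrability with respect to each pushforward
  have hInt : ∀ c : ZMod (p ^ v), Integrable f (Measure.map (T c) m) := by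
    intro c
    have hg : Measurable fun x => f (T c x) := hf.comp (measT c)
    have hsub : B' ⊆ {α : ℤ_[p] | ∀ᵐ x ∂m,
        limsup (fun k : ℕ => ENNReal.ofReal |f (T c (x + k • α))| / (k : ℝ≥0∞)) atTop < ⊤}
          ∩ {α : ℤ_[p] | ‖α‖ = 1} := by
      intro β hβ
      have hβC : q * β ∈ C v := hβ
      constructor
      · have hae := hBsub hβC.1
        have h2 := (qmp c).ae hae
        show ∀ᵐ x ∂m, limsup
          (fun k : ℕ => ENNReal.ofReal |f (T c (x + k • β))| / (k : ℝ≥0∞)) atTop < ⊤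
        refine h2.mono fun x hx => ?_
        have heq : (fun k : ℕ => ENNReal.ofReal |f (T c (x + k • β))| / (k : ℝ≥0∞))
            = fun k : ℕ => ENNReal.ofReal |f (T c x + k • (q * β))| / (k : ℝ≥0∞) := by
          funext k
          congr 2
          rw [hT]; simp only [nsmul_eq_mul]
          ring
        rw [heq]
        exact hx
      · have hn := hβC.2
        rw [Set.mem_setOf_eq, norm_mul] at hn
        have hq' : ‖q‖ = (p : ℝ) ^ (-(v : ℤ)) := by
          rw [hq]
          exact PadicInt.norm_p_pow v
        rw [hq'] at hn
        have hp0 : ((p : ℝ)) ^ (-(v : ℤ)) ≠ 0 := zpow_ne_zero _ (Nat.cast_ne_zero.mpr hp.out.ne_zero)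
        exact (mul_right_eq_self₀.mp hn).resolve_right hp0
    have hH := H (fun x => f (T c x)) hg B' hB'meas hB'pos hsub
    exact (integrable_map_measure hf.aestronglyMeasurable (measT c).aemeasurable).mpr hH
  have hIntν : Integrable f ν := by
    rw [hν]
    exact integrable_finset_sum_measure.mpr fun c _ => hInt c
  rw [hνm] at hIntν
  exact (integrable_smul_measure (pow_ne_zero _ (Nat.cast_ne_zero.mpr hp.out.ne_zero)) (ENNReal.pow_ne_top (ENNReal.natCast_ne_top p))).mp hIntν
end

section
/- Let (n_k)_{k≥0} be a strictly increasing sequence of natural numbers that is ergodic for periodic systems, let G be an Abelian group, let H be a subgroup of G of finite index, and let α, x ∈ G. Then the limit lim_{N→∞} (1/(N+1)) · Σ_{k=0}^N 1_H(x + n_k·α) exists, where 1_H denotes the indicator function of H and n_k·α the n_k-fold sum of α. -/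
open Filter

/-- **Convergence of averages of indicator functions of finite-index subgroups along ergodic
sequences.** If `(n k)` is a strictly increasing sequence of naturals which is ergodic for
periodic systems, `G` is an abelian group, `H ≤ G` a subgroup of finite index, and
`α, x ∈ G`, then `(1/(N+1)) ∑_{k=0}^N 1_H (x + n_k • α)` converges as `N → ∞`. -/
theorem ergodic_sequence_indicator_average_converges
    (n : ℕ → ℕ) (hn : StrictMono n)
    (hErg : ∀ q : ℕ, 0 < q → ∀ h : ℕ,
      Tendsto (fun N : ℕ =>
          (((Finset.range (N + 1)).filter (fun k => n k % q = h % q)).card : ℝ) / (N + 1))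
        atTop (nhds (1 / (q : ℝ))))
    {G : Type*} [AddCommGroup G] (H : AddSubgroup G) [H.FiniteIndex]
    (α x : G) :
    ∃ L : ℝ, Tendsto (fun N : ℕ =>
        (∑ k ∈ Finset.range (N + 1),
          Set.indicator (H : Set G) (fun _ => (1 : ℝ)) (x + n k • α)) / (N + 1 : ℝ))
      atTop (nhds L) := by
  classical
  haveI : Finite (G ⧸ H) := H.finite_quotient_of_finiteIndex
  set αq : G ⧸ H := QuotientAddGroup.mk α with hαq
  set q := addOrderOf αq with hqdef
  have hq0 : 0 < q := addOrderOf_pos αq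
  have hqα : q • α ∈ H := by
    have h1 : q • αq = 0 := addOrderOf_nsmul_eq_zero αq
    rwa [hαq, ← QuotientAddGroup.mk_nsmul, QuotientAddGroup.eq_zero_iff] at h1
  have key : ∀ m : ℕ, (x + m • α ∈ H ↔ x + (m % q) • α ∈ H) := by
    intro m
    conv_lhs => rw [← Nat.mod_add_div m q]
    rw [add_nsmul, mul_nsmul, ← add_assoc]
    exact AddSubgroup.add_mem_cancel_right H (AddSubgroup.nsmul_mem H hqα _)
  set S : Finset ℕ := (Finset.range q).filter (fun h => x + h • α ∈ H) with hS
  have hmemS : ∀ h ∈ S, h % q = h := by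
    intro h hh
    exact Nat.mod_eq_of_lt (Finset.mem_range.mp (Finset.mem_filter.mp hh).1)
  have hcount : ∀ N : ℕ,
      (∑ k ∈ Finset.range (N + 1),
        Set.indicator (H : Set G) (fun _ => (1 : ℝ)) (x + n k • α))
      = ∑ h ∈ S, (((Finset.range (N + 1)).filter (fun k => n k % q = h % q)).card : ℝ) := by
    intro N
    have h1 : (∑ k ∈ Finset.range (N + 1),
        Set.indicator (H : Set G) (fun _ => (1 : ℝ)) (x + n k • α))
        = (((Finset.range (N + 1)).filter (fun k => x + n k • α ∈ H)).card : ℝ) := by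
      rw [Finset.card_filter]
      push_cast
      refine Finset.sum_congr rfl fun k _ => ?_
      by_cases hk : x + n k • α ∈ H
      · simp [Set.indicator_of_mem, hk]
      · simp [Set.indicator_of_notMem, hk]
    rw [h1]
    have h2 : ((Finset.range (N + 1)).filter (fun k => x + n k • α ∈ H)).card
        = ∑ h ∈ S, (((Finset.range (N + 1)).filter (fun k => x + n k • α ∈ H)).filter
            (fun k => n k % q = h)).card := by
      apply Finset.card_eq_sum_card_fiberwise (f := fun k => n k % q)
      intro k hk
      rw [Finset.mem_coe, Finset.mem_filter] at hk
      refine Finset.mem_filter.mpr ⟨Finset.mem_range.mpr (Nat.mod_lt _ hq0), ?_⟩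
      exact (key (n k)).mp hk.2
    rw [h2]
    push_cast
    refine Finset.sum_congr rfl fun h hh => ?_
    rw [Finset.filter_filter, hmemS h hh]
    congr 2
    apply Finset.filter_congr
    intro k _
    have hhH : x + h • α ∈ H := (Finset.mem_filter.mp hh).2
    constructor
    · rintro ⟨-, h2⟩; exact h2
    · intro h2
      refine ⟨?_, h2⟩
      rw [key (n k), h2]
      exact hhH
  refine ⟨(S.card : ℝ) / q, ?_⟩
  have hsum : Tendsto (fun N : ℕ => ∑ h ∈ S,
      (((Finset.range (N + 1)).filter (fun k => n k % q = h % q)).card : ℝ) / (N + 1))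
      atTop (nhds (∑ _h ∈ S, 1 / (q : ℝ))) :=
    tendsto_finset_sum S (fun h _ => hErg q hq0 h)
  have heq : (∑ _h ∈ S, (1 : ℝ) / q) = (S.card : ℝ) / q := by
    rw [Finset.sum_const, nsmul_eq_mul]; ring
  rw [← heq]
  refine hsum.congr fun N => ?_
  rw [hcount N, Finset.sum_div]
end

section
/- Let p be a prime and let G = ℤ_p^ℕ be the countable product of copies of the additive group of p-adic integers, a compact Abelian topological group with Haar probability measure m. Then there exists a measurable function f : G → ℝ with f ∉ L¹(G,m) such that for every α ∈ G, for m-a.e. x, the ordinary Birkhoff averages (1/(N+1)) · Σ_{k=0}^N f(x + k·α) converge as N → ∞. In particular, the conclusion of the L¹ theorem for a single ℤ_p fails for countable products of ℤ_p. -/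
open MeasureTheory Filter
open scoped ENNReal

namespace ProdPadicAux

/-- Birkhoff averages of a periodic sequence converge. -/
lemma tendsto_avg_of_periodic (φ : ℕ → ℝ) (P : ℕ) (hP : 0 < P)
    (hper : ∀ k, φ (k + P) = φ k) :
    ∃ L : ℝ, Tendsto (fun N : ℕ => (∑ k ∈ Finset.range (N + 1), φ k) / (N + 1 : ℝ))
      atTop (nhds L) := by
  have hP' : (P : ℝ) ≠ 0 := by positivity
  set μ : ℝ := (∑ k ∈ Finset.range P, φ k) / P with hμ
  set S : ℕ → ℝ := fun n => (∑ k ∈ Finset.range n, φ k) - n * μ with hS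
  have hstep : ∀ n, S (n + P) = S n := by
    intro n
    induction n with
    | zero =>
      have hPP : (P : ℝ) * ((∑ k ∈ Finset.range P, φ k) / P) = ∑ k ∈ Finset.range P, φ k := by
        field_simp
      simp only [hS, hμ, zero_add, Finset.range_zero, Finset.sum_empty, Nat.cast_zero,
        zero_mul, sub_zero]
      rw [hPP, sub_self]
    | succ n ih =>
      have h1 : n + 1 + P = (n + P) + 1 := by omega
      rw [h1]
      simp only [hS, Finset.sum_range_succ] at ih ⊢
      have h2 := hper n
      push_cast
      push_cast at ih
      linarith
  have hmul : ∀ q n, S (n + q * P) = S n := by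
    intro q
    induction q with
    | zero => intro n; simp
    | succ q ih =>
      intro n
      have h1 : n + (q + 1) * P = (n + q * P) + P := by ring
      rw [h1, hstep, ih]
  have hmod : ∀ n, S n = S (n % P) := by
    intro n
    conv_lhs => rw [← Nat.mod_add_div n P, mul_comm]
    rw [hmul]
  set C : ℝ := ∑ j ∈ Finset.range P, |S j| with hC
  have hbound : ∀ n, |S n| ≤ C := by
    intro n
    rw [hmod n]
    exact Finset.single_le_sum (f := fun j => |S j|) (fun j _ => abs_nonneg _)
      (Finset.mem_range.2 (Nat.mod_lt _ hP))
  refine ⟨μ, ?_⟩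
  have key : ∀ N : ℕ, (∑ k ∈ Finset.range (N + 1), φ k) / (N + 1 : ℝ)
      = μ + S (N + 1) / (N + 1 : ℝ) := by
    intro N
    have hN : ((N : ℝ) + 1) ≠ 0 := by positivity
    simp only [hS]
    push_cast
    field_simp
    ring
  have h0 : Tendsto (fun N : ℕ => S (N + 1) / (N + 1 : ℝ)) atTop (nhds 0) := by
    have hg : Tendsto (fun N : ℕ => C / (N + 1 : ℝ)) atTop (nhds 0) := by
      have h2 := (tendsto_add_atTop_iff_nat 1).2 (tendsto_const_div_atTop_nhds_zero_nat C)
      refine h2.congr fun n => ?_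
      push_cast
      ring
    apply squeeze_zero_norm _ hg
    intro n
    have hn : (0 : ℝ) < (n : ℝ) + 1 := by positivity
    rw [norm_div, Real.norm_of_nonneg (le_of_lt hn)]
    gcongr
    exact hbound (n + 1)
  have hfinal := (tendsto_const_nhds (x := μ) (f := atTop (α := ℕ))).add h0
  rw [add_zero] at hfinal
  exact hfinal.congr fun N => (key N).symm

/-- The basic cylinder sets used in the construction. -/
def cylSet (p : ℕ) [Fact p.Prime] (s : Finset ℕ) : Set (ℕ → ℤ_[p]) :=
  {x | ∀ i ∈ s, (p : ℤ_[p]) ^ (i / 2 + 1) ∣ x i}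

variable {p : ℕ} [hp : Fact p.Prime]

lemma mem_cylSet_iff {s : Finset ℕ} {x : ℕ → ℤ_[p]} :
    x ∈ cylSet p s ↔ ∀ i ∈ s, (p : ℤ_[p]) ^ (i / 2 + 1) ∣ x i := Iff.rfl

lemma isClosed_cylSet (s : Finset ℕ) : IsClosed (cylSet p s) := by
  have h1 : cylSet p s = ⋂ i ∈ s, {x : ℕ → ℤ_[p] | (p : ℤ_[p]) ^ (i / 2 + 1) ∣ x i} := by
    ext x; simp [cylSet]
  rw [h1]
  refine isClosed_biInter (fun i _ => ?_)
  have h2 : {x : ℕ → ℤ_[p] | (p : ℤ_[p]) ^ (i / 2 + 1) ∣ x i}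
      = (fun x : ℕ → ℤ_[p] => ‖x i‖) ⁻¹' Set.Iic ((p : ℝ) ^ (-(i / 2 + 1 : ℕ) : ℤ)) := by
    ext x
    simp only [Set.mem_setOf_eq, Set.mem_preimage, Set.mem_Iic]
    rw [PadicInt.norm_le_pow_iff_mem_span_pow, Ideal.mem_span_singleton]
  rw [h2]
  exact IsClosed.preimage (continuous_norm.comp (continuous_apply i)) isClosed_Iic

lemma exists_shift (y : ℤ_[p]) (n : ℕ) :
    ∃ u : ℕ, u < p ^ n ∧ (p : ℤ_[p]) ^ n ∣ ((u : ℤ_[p]) + y) := by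
  have hppos : 0 < p := hp.out.pos
  have hplt : 0 < p ^ n := pow_pos hppos n
  have hspec := PadicInt.appr_spec n y
  rw [Ideal.mem_span_singleton] at hspec
  have hlt := PadicInt.appr_lt y n
  by_cases h0 : y.appr n = 0
  · exact ⟨0, hplt, by simpa [h0] using hspec⟩
  · refine ⟨p ^ n - y.appr n, by omega, ?_⟩
    have hle : y.appr n ≤ p ^ n := le_of_lt hlt
    have heq : ((p ^ n - y.appr n : ℕ) : ℤ_[p]) + y
        = (y - (y.appr n : ℤ_[p])) + ((p ^ n : ℕ) : ℤ_[p]) := by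
      rw [Nat.cast_sub hle]
      push_cast
      ring
    rw [heq]
    refine dvd_add hspec ?_
    push_cast
    exact dvd_refl _

lemma measure_cylSet [MeasurableSpace (ℕ → ℤ_[p])] [BorelSpace (ℕ → ℤ_[p])]
    (m : Measure (ℕ → ℤ_[p])) [m.IsAddHaarMeasure] [IsProbabilityMeasure m]
    (s : Finset ℕ) :
    m (cylSet p s) = (↑(∏ i ∈ s, p ^ (i / 2 + 1)) : ℝ≥0∞)⁻¹ := by
  classical
  set w : (∀ i : s, Fin (p ^ ((i : ℕ) / 2 + 1))) → (ℕ → ℤ_[p]) :=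
    fun v i => if h : i ∈ s then ((v ⟨i, h⟩ : ℕ) : ℤ_[p]) else 0 with hw
  set T : (∀ i : s, Fin (p ^ ((i : ℕ) / 2 + 1))) → Set (ℕ → ℤ_[p]) :=
    fun v => (fun x => w v + x) ⁻¹' (cylSet p s) with hT
  have hmeas : MeasurableSet (cylSet p s) := (isClosed_cylSet s).measurableSet
  have hTmeas : ∀ v, MeasurableSet (T v) := fun v =>
    ((continuous_const.add continuous_id).measurable) hmeas
  have hdisj : Pairwise (Function.onFun Disjoint T) := by
    intro v v' hne
    rw [Function.onFun, Set.disjoint_left]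
    intro x hxv hxv'
    apply hne
    funext i
    simp only [hT, Set.mem_preimage, mem_cylSet_iff] at hxv hxv'
    have h1 := hxv i.1 i.2
    have h2 := hxv' i.1 i.2
    simp only [Pi.add_apply, hw, dif_pos i.2] at h1 h2
    have hsub : (p : ℤ) ^ ((i : ℕ) / 2 + 1) ∣ (((v i : ℕ) : ℤ) - ((v' i : ℕ) : ℤ)) := by
      have h3 : ((((v i : ℕ) : ℤ) - ((v' i : ℕ) : ℤ) : ℤ) : ℤ_[p])
          = (((v i : ℕ) : ℤ_[p]) + x i.1) - (((v' i : ℕ) : ℤ_[p]) + x i.1) := by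
        push_cast
        ring
      have h4 : (p : ℤ_[p]) ^ ((i : ℕ) / 2 + 1) ∣
          (((((v i : ℕ) : ℤ) - ((v' i : ℕ) : ℤ) : ℤ)) : ℤ_[p]) := by
        rw [h3]
        exact dvd_sub h1 h2
      rwa [PadicInt.pow_p_dvd_int_iff] at h4
    have hvi : ((v i : ℕ) : ℤ) < (p : ℤ) ^ ((i : ℕ) / 2 + 1) := by
      exact_mod_cast (v i).2
    have hvi' : ((v' i : ℕ) : ℤ) < (p : ℤ) ^ ((i : ℕ) / 2 + 1) := by
      exact_mod_cast (v' i).2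
    have hnn : (0:ℤ) ≤ ((v i : ℕ) : ℤ) := Int.natCast_nonneg _
    have hnn' : (0:ℤ) ≤ ((v' i : ℕ) : ℤ) := Int.natCast_nonneg _
    have h6 : (((v i : ℕ) : ℤ) - ((v' i : ℕ) : ℤ)) = 0 := by
      refine Int.eq_zero_of_abs_lt_dvd hsub ?_
      rw [abs_lt]
      constructor
      · linarith
      · linarith
    have h7 : (v i : ℕ) = (v' i : ℕ) := by
      have h8 := sub_eq_zero.mp h6
      exact_mod_cast h8
    exact Fin.ext h7
  have hcover : (⋃ v, T v) = Set.univ := by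
    ext x
    simp only [Set.mem_iUnion, Set.mem_univ, iff_true]
    choose u hu1 hu2 using fun i : s => exists_shift (p := p) (x i.1) ((i : ℕ) / 2 + 1)
    refine ⟨fun i => ⟨u i, hu1 i⟩, ?_⟩
    simp only [hT, Set.mem_preimage, mem_cylSet_iff]
    intro i hi
    have h3 := hu2 ⟨i, hi⟩
    simp only [Pi.add_apply, hw, dif_pos hi]
    exact h3
  have hsum : (1 : ℝ≥0∞) = ∑' v, m (T v) := by
    rw [← measure_iUnion hdisj hTmeas, hcover, measure_univ]
  have hTconst : ∀ v, m (T v) = m (cylSet p s) := fun v =>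
    measure_preimage_add m (w v) _
  have hcard : (Fintype.card (∀ i : s, Fin (p ^ ((i : ℕ) / 2 + 1))))
      = ∏ i ∈ s, p ^ (i / 2 + 1) := by
    rw [Fintype.card_pi]
    simp only [Fintype.card_fin]
    exact Finset.prod_coe_sort s (fun i => p ^ (i / 2 + 1))
  have hfin : (1 : ℝ≥0∞) = (↑(∏ i ∈ s, p ^ (i / 2 + 1)) : ℝ≥0∞) * m (cylSet p s) := by
    rw [hsum, tsum_fintype]
    simp only [hTconst]
    rw [Finset.sum_const, Finset.card_univ, hcard, nsmul_eq_mul]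
  have hc0 : (↑(∏ i ∈ s, p ^ (i / 2 + 1)) : ℝ≥0∞) ≠ 0 := by
    have hpos : 0 < ∏ i ∈ s, p ^ (i / 2 + 1) :=
      Finset.prod_pos fun i _ => pow_pos hp.out.pos _
    exact Nat.cast_ne_zero.mpr hpos.ne'
  have hct : (↑(∏ i ∈ s, p ^ (i / 2 + 1)) : ℝ≥0∞) ≠ ⊤ := ENNReal.natCast_ne_top _
  calc m (cylSet p s)
      = (↑(∏ i ∈ s, p ^ (i / 2 + 1)) : ℝ≥0∞)⁻¹
        * ((↑(∏ i ∈ s, p ^ (i / 2 + 1)) : ℝ≥0∞) * m (cylSet p s)) := by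
        rw [← mul_assoc, ENNReal.inv_mul_cancel hc0 hct, one_mul]
    _ = (↑(∏ i ∈ s, p ^ (i / 2 + 1)) : ℝ≥0∞)⁻¹ := by rw [← hfin, mul_one]

end ProdPadicAux

open ProdPadicAux

/-- **Failure of the `L¹` theorem for countable products of `ℤ_p`.**
Let `G = ℤ_p^ℕ` be the countable product of copies of the additive group of `p`-adic
integers, a compact abelian topological group with Haar probability measure `m`. Then there
is a measurable `f : G → ℝ` with `f ∉ L¹(G, m)` such that for every `α ∈ G` the ordinary
Birkhoff averages `(1/(N+1)) ∑_{k=0}^N f (x + k • α)` converge for `m`-a.e. `x`. -/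
theorem product_padic_exists_nonintegrable_with_full_rotation_set
    (p : ℕ) [Fact p.Prime]
    [MeasurableSpace (ℕ → ℤ_[p])] [BorelSpace (ℕ → ℤ_[p])]
    (m : Measure (ℕ → ℤ_[p])) [m.IsAddHaarMeasure] [IsProbabilityMeasure m] :
    ∃ f : (ℕ → ℤ_[p]) → ℝ, Measurable f ∧ ¬ Integrable f m ∧
      ∀ α : ℕ → ℤ_[p], ∀ᵐ x ∂m, ∃ L : ℝ,
        Tendsto (fun N : ℕ => (∑ k ∈ Finset.range (N + 1), f (x + k • α)) / (N + 1 : ℝ))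
          atTop (nhds L) := by
  classical
  have hp : Fact p.Prime := ‹_›
  have hp2 : 2 ≤ p := hp.out.two_le
  have hppos : 0 < p := hp.out.pos
  have hpE0 : (p : ℝ≥0∞) ≠ 0 := Nat.cast_ne_zero.mpr hppos.ne'
  have hpEt : (p : ℝ≥0∞) ≠ ⊤ := ENNReal.natCast_ne_top p
  -- the basic sets
  set A : ℕ → Set (ℕ → ℤ_[p]) := fun n => cylSet p {2*n, 2*n+1} with hA
  set D : ℕ → Set (ℕ → ℤ_[p]) := fun n => A n \ ⋃ j ∈ Finset.range n, A j with hD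
  set q : ℕ → ℕ := fun n => p ^ (n+1) * p ^ (n+1) with hq
  have hqpos : ∀ n, 0 < q n := by
    intro n
    simp only [hq]
    positivity
  have hq0 : ∀ n, ((q n : ℕ) : ℝ≥0∞) ≠ 0 := fun n => Nat.cast_ne_zero.mpr (hqpos n).ne'
  have hqt : ∀ n, ((q n : ℕ) : ℝ≥0∞) ≠ ⊤ := fun n => ENNReal.natCast_ne_top _
  have hAmeas : ∀ n, MeasurableSet (A n) := fun n => (isClosed_cylSet _).measurableSet
  have hDmeas : ∀ n, MeasurableSet (D n) := fun n =>
    (hAmeas n).diff (Finset.measurableSet_biUnion _ fun j _ => hAmeas j)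
  have e1 : ∀ n : ℕ, (2*n)/2 = n := fun n => by omega
  have e2 : ∀ n : ℕ, (2*n+1)/2 = n := fun n => by omega
  have hne2 : ∀ n : ℕ, (2*n : ℕ) ≠ 2*n+1 := fun n => by omega
  have hAmem : ∀ n (x : ℕ → ℤ_[p]), x ∈ A n ↔
      ((p:ℤ_[p])^(n+1) ∣ x (2*n) ∧ (p:ℤ_[p])^(n+1) ∣ x (2*n+1)) := by
    intro n x
    simp only [hA]
    rw [mem_cylSet_iff]
    constructor
    · intro h
      refine ⟨?_, ?_⟩
      · have := h (2*n) (by simp)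
        rwa [e1 n] at this
      · have := h (2*n+1) (by simp)
        rwa [e2 n] at this
    · rintro ⟨h1, h2⟩ i hi
      simp only [Finset.mem_insert, Finset.mem_singleton] at hi
      rcases hi with rfl | rfl
      · rwa [e1 n]
      · rwa [e2 n]
  -- exact measures of the cylinder sets
  have hprodA : ∀ n, (∏ i ∈ ({2*n, 2*n+1} : Finset ℕ), p ^ (i / 2 + 1)) = q n := by
    intro n
    rw [Finset.prod_insert (Finset.notMem_singleton.mpr (hne2 n)), Finset.prod_singleton,
      e1 n, e2 n]
  have hmA : ∀ n, m (A n) = ((q n : ℕ) : ℝ≥0∞)⁻¹ := by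
    intro n
    simp only [hA]
    rw [measure_cylSet m, hprodA n]
  have hmAA : ∀ j n, j < n → m (A j ∩ A n) = ((q j * q n : ℕ) : ℝ≥0∞)⁻¹ := by
    intro j n hjn
    have hjn' : j ≠ n := hjn.ne
    have hset : A j ∩ A n = cylSet p ({2*j, 2*j+1} ∪ {2*n, 2*n+1}) := by
      ext x
      simp only [hA, Set.mem_inter_iff, mem_cylSet_iff]
      rw [Finset.forall_mem_union]
    have hdisjf : Disjoint ({2*j, 2*j+1} : Finset ℕ) ({2*n, 2*n+1} : Finset ℕ) := by
      rw [Finset.disjoint_left]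
      intro i hi hin
      simp only [Finset.mem_insert, Finset.mem_singleton] at hi hin
      omega
    rw [hset, measure_cylSet m, Finset.prod_union hdisjf, hprodA j, hprodA n]
  -- the function
  set fE : (ℕ → ℤ_[p]) → ℝ≥0∞ :=
    fun x => ∑' n, (D n).indicator (fun _ => ((q n : ℕ) : ℝ≥0∞)) x with hfE
  set f : (ℕ → ℤ_[p]) → ℝ := fun x => (fE x).toReal with hf
  have hDunique : ∀ (x : ℕ → ℤ_[p]) n, x ∈ D n → ∀ k, k ≠ n → x ∉ D k := by
    intro x n hxn k hk hxk
    rcases lt_or_gt_of_ne hk with h | h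
    · exact hxn.2 (Set.mem_biUnion (Finset.mem_range.mpr h) hxk.1)
    · exact hxk.2 (Set.mem_biUnion (Finset.mem_range.mpr h) hxn.1)
  have hfE_mem : ∀ n (x : ℕ → ℤ_[p]), x ∈ D n → fE x = ((q n : ℕ) : ℝ≥0∞) := by
    intro n x hx
    simp only [hfE]
    rw [tsum_eq_single n]
    · rw [Set.indicator_of_mem hx]
    · intro k hk
      exact Set.indicator_of_notMem (hDunique x n hx k hk) _
  have hfE_zero : ∀ x : ℕ → ℤ_[p], (∀ n, x ∉ D n) → fE x = 0 := by
    intro x hx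
    simp only [hfE]
    calc (∑' n, (D n).indicator (fun _ => ((q n : ℕ) : ℝ≥0∞)) x)
        = ∑' n : ℕ, (0 : ℝ≥0∞) := tsum_congr fun n => Set.indicator_of_notMem (hx n) _
      _ = 0 := tsum_zero
  have hfE_ne_top : ∀ x, fE x ≠ ⊤ := by
    intro x
    by_cases hx : ∃ n, x ∈ D n
    · obtain ⟨n, hn⟩ := hx
      rw [hfE_mem n x hn]
      exact ENNReal.natCast_ne_top _
    · push_neg at hx
      rw [hfE_zero x hx]
      exact ENNReal.zero_ne_top
  have hcongr : ∀ x y : ℕ → ℤ_[p], (∀ n, x ∈ D n ↔ y ∈ D n) → fE x = fE y := by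
    intro x y h
    simp only [hfE]
    refine tsum_congr fun n => ?_
    by_cases hx : x ∈ D n
    · rw [Set.indicator_of_mem hx, Set.indicator_of_mem ((h n).1 hx)]
    · rw [Set.indicator_of_notMem hx, Set.indicator_of_notMem (fun hy => hx ((h n).2 hy))]
  have hfEmeas : Measurable fE := by
    simp only [hfE]
    exact Measurable.ennreal_tsum fun n => measurable_const.indicator (hDmeas n)
  have hfmeas : Measurable f := hfEmeas.ennreal_toReal
  refine ⟨f, hfmeas, ?_, ?_⟩
  · -- not integrable
    intro hInt
    have hfin := hInt.hasFiniteIntegral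
    rw [HasFiniteIntegral] at hfin
    have h1 : ∀ x, ‖f x‖ₑ = fE x := by
      intro x
      simp only [hf]
      rw [Real.enorm_eq_ofReal ENNReal.toReal_nonneg, ENNReal.ofReal_toReal (hfE_ne_top x)]
    have h2 : ∫⁻ x, ‖f x‖ₑ ∂m = ⊤ := by
      have h3 : ∫⁻ x, ‖f x‖ₑ ∂m = ∫⁻ x, fE x ∂m := lintegral_congr h1
      rw [h3]
      simp only [hfE]
      rw [lintegral_tsum fun n => (measurable_const.indicator (hDmeas n)).aemeasurable]
      have h4 : ∀ n : ℕ, ∫⁻ x, (D n).indicator (fun _ => ((q n : ℕ) : ℝ≥0∞)) x ∂m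
          = ((q n : ℕ) : ℝ≥0∞) * m (D n) := fun n => lintegral_indicator_const (hDmeas n) _
      rw [tsum_congr h4]
      -- each term is at least 1/2
      have hge : ∀ n : ℕ, (2 : ℝ≥0∞)⁻¹ ≤ ((q n : ℕ) : ℝ≥0∞) * m (D n) := by
        intro n
        have hUb : m (A n ∩ ⋃ j ∈ Finset.range n, A j) ≤ 2⁻¹ * ((q n : ℕ) : ℝ≥0∞)⁻¹ := by
          have hsub : A n ∩ ⋃ j ∈ Finset.range n, A j
              ⊆ ⋃ j ∈ Finset.range n, (A j ∩ A n) := by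
            intro x hx
            obtain ⟨hx1, hx2⟩ := hx
            rw [Set.mem_iUnion₂] at hx2 ⊢
            obtain ⟨j, hj, hxj⟩ := hx2
            exact ⟨j, hj, hxj, hx1⟩
          refine (measure_mono hsub).trans ?_
          refine (measure_biUnion_finset_le _ _).trans ?_
          have hterm : ∀ j ∈ Finset.range n, m (A j ∩ A n)
              ≤ (2:ℝ≥0∞)⁻¹ ^ (j+2) * ((q n : ℕ) : ℝ≥0∞)⁻¹ := by
            intro j hj
            rw [hmAA j n (Finset.mem_range.mp hj)]
            rw [Nat.cast_mul, ENNReal.mul_inv (Or.inl (hq0 j)) (Or.inl (hqt j))]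
            refine mul_le_mul_left ?_ _
            have hqj : (2:ℕ) ^ (j+2) ≤ q j := by
              rw [hq]
              calc (2:ℕ)^(j+2) ≤ 2^(j+1) * 2^(j+1) := by
                    rw [← pow_add]
                    exact Nat.pow_le_pow_right (by norm_num) (by omega)
                _ ≤ p^(j+1) * p^(j+1) :=
                    Nat.mul_le_mul (Nat.pow_le_pow_left hp2 _) (Nat.pow_le_pow_left hp2 _)
            calc ((q j : ℕ) : ℝ≥0∞)⁻¹ ≤ (((2:ℕ)^(j+2) : ℕ) : ℝ≥0∞)⁻¹ := by
                  gcongr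
              _ = (2:ℝ≥0∞)⁻¹ ^ (j+2) := by
                  push_cast
                  rw [← ENNReal.inv_pow]
          refine (Finset.sum_le_sum hterm).trans ?_
          rw [← Finset.sum_mul]
          refine mul_le_mul_left ?_ _
          refine (ENNReal.sum_le_tsum _).trans ?_
          have h5 : ∀ j : ℕ, (2:ℝ≥0∞)⁻¹ ^ (j+2) = (2:ℝ≥0∞)⁻¹ ^ j * (2⁻¹ * 2⁻¹) := by
            intro j
            rw [pow_add]
            ring_nf
          rw [tsum_congr h5, ENNReal.tsum_mul_right, ENNReal.tsum_geometric,
            ENNReal.one_sub_inv_two, inv_inv]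
          rw [← mul_assoc, ENNReal.mul_inv_cancel (by norm_num) (by norm_num), one_mul]
        have hsplit : m (D n) + m (A n ∩ ⋃ j ∈ Finset.range n, A j) = m (A n) := by
          simp only [hD]
          exact measure_diff_add_inter _
            (Finset.measurableSet_biUnion _ fun j _ => hAmeas j)
        have hle : (1:ℝ≥0∞) ≤ ((q n : ℕ) : ℝ≥0∞) * m (D n) + 2⁻¹ := by
          calc (1:ℝ≥0∞) = ((q n : ℕ) : ℝ≥0∞) * m (A n) := by
                rw [hmA n, ENNReal.mul_inv_cancel (hq0 n) (hqt n)]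
            _ = ((q n : ℕ) : ℝ≥0∞) * (m (D n) + m (A n ∩ ⋃ j ∈ Finset.range n, A j)) := by
                rw [hsplit]
            _ = ((q n : ℕ) : ℝ≥0∞) * m (D n)
                + ((q n : ℕ) : ℝ≥0∞) * m (A n ∩ ⋃ j ∈ Finset.range n, A j) := by
                rw [mul_add]
            _ ≤ ((q n : ℕ) : ℝ≥0∞) * m (D n)
                + ((q n : ℕ) : ℝ≥0∞) * (2⁻¹ * ((q n : ℕ) : ℝ≥0∞)⁻¹) := by
                gcongr
            _ = ((q n : ℕ) : ℝ≥0∞) * m (D n) + 2⁻¹ := by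
                rw [mul_comm (2⁻¹ : ℝ≥0∞), ← mul_assoc,
                  ENNReal.mul_inv_cancel (hq0 n) (hqt n), one_mul]
        have h6 := tsub_le_iff_right.mpr hle
        rwa [ENNReal.one_sub_inv_two] at h6
      have htop : (⊤:ℝ≥0∞) ≤ ∑' n : ℕ, ((q n : ℕ) : ℝ≥0∞) * m (D n) := by
        calc (⊤:ℝ≥0∞) = ∑' _ : ℕ, (2:ℝ≥0∞)⁻¹ :=
              (ENNReal.tsum_const_eq_top_of_ne_zero (by norm_num)).symm
          _ ≤ _ := ENNReal.tsum_le_tsum hge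
      exact top_le_iff.mp htop
    rw [h2] at hfin
    exact (lt_irrefl _ hfin)
  · -- the averages converge a.e. for every α
    intro α
    have happ : ∀ (x : ℕ → ℤ_[p]) (k : ℕ) (i : ℕ),
        (x + k • α) i = x i + (k : ℤ_[p]) * α i := by
      intro x k i
      simp [nsmul_eq_mul]
    have hshift : ∀ (a c k t : ℕ), k = t + p^a * c → ∀ (y z : ℤ_[p]),
        ((p:ℤ_[p])^a ∣ (y + (k:ℤ_[p]) * z) ↔ (p:ℤ_[p])^a ∣ (y + (t:ℤ_[p]) * z)) := by
      intro a c k t hk y z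
      have h2 : y + (k:ℤ_[p]) * z = (y + (t:ℤ_[p]) * z) + (p:ℤ_[p])^a * ((c:ℤ_[p]) * z) := by
        subst hk
        push_cast
        ring
      rw [h2]
      constructor
      · intro h
        have h3 := dvd_sub h (dvd_mul_right ((p:ℤ_[p])^a) ((c:ℤ_[p]) * z))
        simpa using h3
      · intro h
        exact dvd_add h (dvd_mul_right _ _)
    set sset : ℕ → Set (ℕ → ℤ_[p]) :=
      fun n => ⋃ k : ℕ, (fun x => x + k • α) ⁻¹' (A n) with hsset
    have haddmeas : ∀ k : ℕ, Measurable (fun x : ℕ → ℤ_[p] => x + k • α) :=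
      fun k => (continuous_id.add continuous_const).measurable
    have hsmeas : ∀ n, MeasurableSet (sset n) :=
      fun n => MeasurableSet.iUnion fun k => (haddmeas k) (hAmeas n)
    have hsub : ∀ n, sset n ⊆ ⋃ t ∈ Finset.range (p ^ (n+1)),
        (fun x => x + t • α) ⁻¹' (A n) := by
      intro n x hx
      simp only [hsset, Set.mem_iUnion, Set.mem_preimage] at hx
      obtain ⟨k, hk⟩ := hx
      have hqp : 0 < p ^ (n+1) := pow_pos hppos _
      refine Set.mem_biUnion (Finset.mem_range.2 (Nat.mod_lt k hqp)) ?_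
      rw [Set.mem_preimage]
      rw [hAmem] at hk ⊢
      rw [happ, happ] at hk
      rw [happ, happ]
      have hk_eq : k = k % p^(n+1) + p^(n+1) * (k / p^(n+1)) := (Nat.mod_add_div _ _).symm
      exact ⟨(hshift (n+1) (k / p^(n+1)) k (k % p^(n+1)) hk_eq _ _).mp hk.1,
        (hshift (n+1) (k / p^(n+1)) k (k % p^(n+1)) hk_eq _ _).mp hk.2⟩
    have hms : ∀ n, m (sset n) ≤ (2:ℝ≥0∞)⁻¹ ^ (n+1) := by
      intro n
      have hppow0 : ((p:ℝ≥0∞))^(n+1) ≠ 0 := pow_ne_zero _ hpE0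
      have hppowt : ((p:ℝ≥0∞))^(n+1) ≠ ⊤ := ENNReal.pow_ne_top hpEt
      calc m (sset n) ≤ m (⋃ t ∈ Finset.range (p^(n+1)), (fun x => x + t • α) ⁻¹' (A n)) :=
            measure_mono (hsub n)
        _ ≤ ∑ t ∈ Finset.range (p^(n+1)), m ((fun x => x + t • α) ⁻¹' (A n)) :=
            measure_biUnion_finset_le _ _
        _ = ∑ t ∈ Finset.range (p^(n+1)), m (A n) := by
            refine Finset.sum_congr rfl fun t _ => ?_
            have hcomm : (fun x : ℕ → ℤ_[p] => x + t • α) = (fun x => t • α + x) :=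
              funext fun x => add_comm _ _
            rw [hcomm]
            exact measure_preimage_add m _ _
        _ = ((p^(n+1) : ℕ) : ℝ≥0∞) * m (A n) := by
            rw [Finset.sum_const, Finset.card_range, nsmul_eq_mul]
        _ = ((p:ℝ≥0∞)^(n+1))⁻¹ := by
            rw [hmA n]
            simp only [hq]
            push_cast
            rw [ENNReal.mul_inv (Or.inl hppow0) (Or.inl hppowt),
              ← mul_assoc, ENNReal.mul_inv_cancel hppow0 hppowt, one_mul]
        _ ≤ (2:ℝ≥0∞)⁻¹ ^ (n+1) := by
            rw [← ENNReal.inv_pow]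
            gcongr
            exact_mod_cast hp2
    have hsum_ne : (∑' n, m (sset n)) ≠ ⊤ := by
      have hle : (∑' n, m (sset n)) ≤ ∑' n : ℕ, (2:ℝ≥0∞)⁻¹ ^ (n+1) :=
        ENNReal.tsum_le_tsum hms
      have hgeo : (∑' n : ℕ, (2:ℝ≥0∞)⁻¹ ^ (n+1)) = 1 := by
        rw [ENNReal.tsum_geometric_add_one, ENNReal.one_sub_inv_two, inv_inv,
          ENNReal.inv_mul_cancel (by norm_num) (by norm_num)]
      rw [hgeo] at hle
      exact (hle.trans_lt ENNReal.one_lt_top).ne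
    have hBC := MeasureTheory.ae_eventually_notMem (μ := m) (s := sset) hsum_ne
    refine hBC.mono fun x hx => ?_
    obtain ⟨N₀, hN₀⟩ := eventually_atTop.mp hx
    have hnever : ∀ n, N₀ ≤ n → ∀ k : ℕ, x + k • α ∉ A n := by
      intro n hn k hk
      refine hN₀ n hn ?_
      simp only [hsset, Set.mem_iUnion, Set.mem_preimage]
      exact ⟨k, hk⟩
    set P := p ^ N₀ with hP
    have hPpos : 0 < P := pow_pos hppos _
    have hAiff : ∀ k n, (x + (k + P) • α ∈ A n ↔ x + k • α ∈ A n) := by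
      intro k n
      by_cases hn : N₀ ≤ n
      · exact iff_of_false (hnever n hn _) (hnever n hn _)
      · push_neg at hn
        rw [hAmem, hAmem]
        simp only [happ]
        have hd : k + P = k + p^(n+1) * p^(N₀ - (n+1)) := by
          rw [hP, ← pow_add]
          congr 2
          omega
        exact and_congr (hshift (n+1) (p^(N₀-(n+1))) (k+P) k hd _ _)
          (hshift (n+1) (p^(N₀-(n+1))) (k+P) k hd _ _)
    have hDiff : ∀ k n, (x + (k + P) • α ∈ D n ↔ x + k • α ∈ D n) := by
      intro k n
      simp only [hD, Set.mem_diff, Set.mem_iUnion, Finset.mem_range, exists_prop]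
      exact and_congr (hAiff k n)
        (not_congr (exists_congr fun j => and_congr_right fun _ => hAiff k j))
    have hper : ∀ k, f (x + (k + P) • α) = f (x + k • α) := by
      intro k
      simp only [hf]
      congr 1
      exact hcongr _ _ (fun n => hDiff k n)
    exact tendsto_avg_of_periodic (fun k => f (x + k • α)) P hPpos hper
end
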